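/- arXiv:1901.07158 — 4 statements merged into one kernel-verified Lean document; each statement's English description precedes it below -/
import Mathlib

section
/- Let dim(·|·) be a bivariant Sylvester module rank function for a unital ring R. Let (M_j, β_{jk}) be a direct system of R-modules over a directed set J with direct limit M_∞, and let M be an R-module with compatible maps α_j : M → M_j and α_∞ : M → M_∞. If dim(im(α_i)|M_i) < +∞ for some i ∈ J, then dim(im(α_∞)|M_∞) = lim_j dim(im(α_j)|M_j) = inf_j dim(im(α_j)|M_j). -/
universe u
open scoped NNReal ENNReal

/-- A bivariant Sylvester module rank function for a unital ring `R`: to each pair of left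
`R`-modules `N ⊆ M` (encoded as a submodule `N` of a module `M`) it assigns a value
`d M N ∈ ℝ≥0∞`, thought of as `dim(N|M)`, satisfying isomorphism invariance, normalization,
direct sum additivity, the two continuity conditions, and additivity. -/
structure BivariantSylvesterRank (R : Type u) [Ring R] where
  d : ∀ (M : Type u) [AddCommGroup M] [Module R M], Submodule R M → ℝ≥0∞
  iso_invariant : ∀ (M N : Type u) [AddCommGroup M] [Module R M] [AddCommGroup N] [Module R N]
      (e : M ≃ₗ[R] N) (p : Submodule R M),
      d M p = d N (p.map (e : M →ₗ[R] N))
  d_zero : d PUnit ⊤ = 0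
  d_ring : d R ⊤ = 1
  d_prod : ∀ (M N : Type u) [AddCommGroup M] [Module R M] [AddCommGroup N] [Module R N]
      (p : Submodule R M) (q : Submodule R N),
      d (M × N) (p.prod q) = d M p + d N q
  continuity_sup : ∀ (M : Type u) [AddCommGroup M] [Module R M] (p : Submodule R M),
      d M p = ⨆ (p' : {p' : Submodule R M // p'.FG ∧ p' ≤ p}), d M p'.1
  continuity_inf : ∀ (M : Type u) [AddCommGroup M] [Module R M] (p : Submodule R M), p.FG →
      d M p = ⨅ (q : {q : Submodule R M // q.FG ∧ p ≤ q}), d q.1 (p.comap q.1.subtype)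
  additivity : ∀ (M : Type u) [AddCommGroup M] [Module R M] (p : Submodule R M),
      d M ⊤ = d M p + d (M ⧸ p) ⊤


section Equivs
variable (R : Type u) [Ring R]

/-- linear equiv of a subsingleton module with PUnit -/
def subsingletonEquivPUnit (X : Type u) [AddCommGroup X] [Module R X] [Subsingleton X] :
    X ≃ₗ[R] PUnit.{u+1} where
  toFun _ := PUnit.unit
  invFun _ := 0
  map_add' _ _ := rfl
  map_smul' _ _ := rfl
  left_inv x := Subsingleton.elim _ _
  right_inv x := rfl

/-- Fin (n+1) pi splitting -/
def piFinSuccLinearEquiv (n : ℕ) : (Fin (n+1) → R) ≃ₗ[R] R × (Fin n → R) where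
  toFun g := (g 0, g ∘ Fin.succ)
  invFun x := Fin.cons x.1 x.2
  map_add' g h := rfl
  map_smul' c g := rfl
  left_inv g := by
    funext i
    refine Fin.cases ?_ (fun j => ?_) i <;> simp
  right_inv x := by
    refine Prod.ext (by simp) ?_
    funext j; simp

namespace BivariantSylvesterRank

variable {R : Type u} [Ring R] (dim : BivariantSylvesterRank R)

section Basic
variable {M N : Type u} [AddCommGroup M] [Module R M] [AddCommGroup N] [Module R N]

theorem dim_mono {p p' : Submodule R M} (h : p ≤ p') : dim.d M p ≤ dim.d M p' := by
  rw [dim.continuity_sup M p, dim.continuity_sup M p']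
  exact iSup_le fun ⟨q, hq, hqp⟩ => le_iSup_of_le ⟨q, hq, hqp.trans h⟩ le_rfl

theorem dim_equiv (e : M ≃ₗ[R] N) (p : Submodule R M) :
    dim.d M p = dim.d N (p.map (e : M →ₗ[R] N)) := dim.iso_invariant M N e p

theorem dim_top_equiv (e : M ≃ₗ[R] N) : dim.d M ⊤ = dim.d N ⊤ := by
  rw [dim.dim_equiv e ⊤, Submodule.map_top, LinearEquiv.range]

theorem dim_quot_top_le (p : Submodule R M) : dim.d (M ⧸ p) ⊤ ≤ dim.d M ⊤ := by
  rw [dim.additivity M p]; exact le_add_self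

theorem dim_le_top (p : Submodule R M) : dim.d M p ≤ dim.d M ⊤ := dim.dim_mono le_top

/-- restriction to a f.g. ambient submodule can only increase dim -/
theorem dim_le_fg_ambient {p q : Submodule R M} (hp : p.FG) (hq : q.FG) (hpq : p ≤ q) :
    dim.d M p ≤ dim.d ↥q (p.comap q.subtype) := by
  rw [dim.continuity_inf M p hp]
  exact iInf_le (fun q' : {q' : Submodule R M // q'.FG ∧ p ≤ q'} =>
    dim.d ↥q'.1 (p.comap q'.1.subtype)) ⟨q, hq, hpq⟩

end Basic
end BivariantSylvesterRank

namespace BivariantSylvesterRank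
variable {R : Type u} [Ring R] (dim : BivariantSylvesterRank R)

section Fin
variable {M N P : Type u} [AddCommGroup M] [Module R M] [AddCommGroup N] [Module R N]
  [AddCommGroup P] [Module R P]

theorem dim_pi_fin_le (n : ℕ) : dim.d (Fin n → R) ⊤ ≤ n := by
  induction n with
  | zero =>
      have h0 : dim.d (Fin 0 → R) ⊤ = dim.d PUnit.{u+1} ⊤ :=
        dim.dim_top_equiv (subsingletonEquivPUnit R (Fin 0 → R))
      rw [h0, dim.d_zero]
      exact zero_le
  | succ n ih =>
      rw [dim.dim_top_equiv (piFinSuccLinearEquiv R n), ← Submodule.prod_top,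
        dim.d_prod, dim.d_ring]
      rw [Nat.cast_succ, add_comm (1 : ℝ≥0∞)]
      exact add_le_add ih le_rfl

theorem dim_top_ne_top [Module.Finite R P] : dim.d P ⊤ ≠ ⊤ := by
  obtain ⟨n, f, hf⟩ := Module.Finite.exists_fin' R P
  have e := f.quotKerEquivOfSurjective hf
  have h1 : dim.d P ⊤ ≤ n := by
    rw [← dim.dim_top_equiv e]
    exact le_trans (dim.dim_quot_top_le _) (dim.dim_pi_fin_le n)
  exact ne_top_of_le_ne_top (by simp) h1

end Fin
end BivariantSylvesterRank

namespace BivariantSylvesterRank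
variable {R : Type u} [Ring R] (dim : BivariantSylvesterRank R)

section Helpers
variable {M N : Type u} [AddCommGroup M] [Module R M] [AddCommGroup N] [Module R N]

theorem fg_comap_subtype {p q : Submodule R M} (h : p ≤ q) (hp : p.FG) :
    (p.comap q.subtype).FG := by
  haveI : Module.Finite R ↥p := Module.Finite.iff_fg.mpr hp
  exact Module.Finite.iff_fg.mp (Module.Finite.equiv (Submodule.comapSubtypeEquivOfLe h).symm)

theorem restrict_surjective (φ : M →ₗ[R] N) (S : Submodule R M)
    (hS : ∀ x ∈ S, φ x ∈ S.map φ) :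
    Function.Surjective (φ.restrict hS) := by
  rintro ⟨y, x, hx, rfl⟩
  exact ⟨⟨x, hx⟩, rfl⟩

theorem map_restrict_eq (φ : M →ₗ[R] N) (S : Submodule R M) (p : Submodule R M) (hp : p ≤ S)
    (hS : ∀ x ∈ S, φ x ∈ S.map φ) :
    (p.comap S.subtype).map (φ.restrict hS) = (p.map φ).comap (S.map φ).subtype := by
  ext ⟨y, hy⟩
  simp only [Submodule.mem_map, Submodule.mem_comap, Submodule.coe_subtype,
    LinearMap.restrict_apply, Subtype.ext_iff]
  constructor
  · rintro ⟨⟨x, hxS⟩, hxp, rfl⟩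
    exact ⟨x, hxp, rfl⟩
  · rintro ⟨x, hxp, rfl⟩
    exact ⟨⟨x, hp hxp⟩, hxp, rfl⟩

/-- lifting a f.g. submodule below an image -/
theorem exists_fg_le_map (φ : M →ₗ[R] N) {p : Submodule R M} {p₂ : Submodule R N}
    (h2 : p₂.FG) (hle : p₂ ≤ p.map φ) :
    ∃ p₁ : Submodule R M, p₁.FG ∧ p₁ ≤ p ∧ p₂ ≤ p₁.map φ := by
  obtain ⟨s, rfl⟩ := h2
  have hmem : ∀ x : ↥(↑s : Set N), ∃ y, y ∈ p ∧ φ y = (x : N) := by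
    rintro ⟨x, hx⟩
    exact Submodule.mem_map.mp (hle (Submodule.subset_span hx))
  choose g hg1 hg2 using hmem
  refine ⟨Submodule.span R (Set.range g), Submodule.fg_span (Set.finite_range g), ?_, ?_⟩
  · rw [Submodule.span_le]
    rintro _ ⟨x, rfl⟩
    exact hg1 x
  · rw [Submodule.span_le]
    intro x hx
    refine ⟨g ⟨x, hx⟩, Submodule.subset_span ⟨⟨x, hx⟩, rfl⟩, hg2 ⟨x, hx⟩⟩

/-- The workhorse: comparing dims through an injective map into a f.g. ambient. -/
theorem dim_le_of_injective (θ : M →ₗ[R] N) (hθ : Function.Injective θ)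
    {V : Submodule R M} (hV : V.FG) {Q : Submodule R N} (hQ : Q.FG)
    (h1 : V.map θ ≤ Q) (h2 : Q ≤ LinearMap.range θ) :
    dim.d M V ≤ dim.d ↥Q ((V.map θ).comap Q.subtype) := by
  set Q₀ := Q.comap θ with hQ₀def
  have hVQ₀ : V ≤ Q₀ := fun x hx => h1 (Submodule.mem_map_of_mem hx)
  have hres : ∀ x ∈ Q₀, θ x ∈ Q := fun x hx => hx
  set ψ : ↥Q₀ →ₗ[R] ↥Q := θ.restrict hres with hψdef
  have hbij : Function.Bijective ψ := by
    constructor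
    · intro a b hab
      exact Subtype.ext (hθ (Subtype.ext_iff.mp hab))
    · rintro ⟨y, hy⟩
      obtain ⟨x, rfl⟩ := h2 hy
      exact ⟨⟨x, hy⟩, rfl⟩
  set e : ↥Q₀ ≃ₗ[R] ↥Q := LinearEquiv.ofBijective ψ hbij with hedef
  have hQ₀fg : Q₀.FG := by
    haveI : Module.Finite R ↥Q := Module.Finite.iff_fg.mpr hQ
    exact Module.Finite.iff_fg.mp (Module.Finite.equiv e.symm)
  have key : (V.comap Q₀.subtype).map (e : ↥Q₀ →ₗ[R] ↥Q) = (V.map θ).comap Q.subtype := by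
    ext ⟨y, hy⟩
    simp only [Submodule.mem_map, Submodule.mem_comap, Submodule.coe_subtype, Subtype.ext_iff]
    constructor
    · rintro ⟨⟨x, hxQ₀⟩, hxV, rfl⟩
      exact ⟨x, hxV, rfl⟩
    · rintro ⟨x, hxV, rfl⟩
      exact ⟨⟨x, hVQ₀ hxV⟩, hxV, rfl⟩
  calc dim.d M V ≤ dim.d ↥Q₀ (V.comap Q₀.subtype) := dim.dim_le_fg_ambient hV hQ₀fg hVQ₀
    _ = dim.d ↥Q ((V.map θ).comap Q.subtype) := by
        rw [dim.dim_equiv e (V.comap Q₀.subtype), key]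

end Helpers
end BivariantSylvesterRank

namespace BivariantSylvesterRank
variable {R : Type u} [Ring R] (dim : BivariantSylvesterRank R)

section Exact
variable {M N : Type u} [AddCommGroup M] [Module R M] [AddCommGroup N] [Module R N]

/-- exact additivity inside an ambient module of finite total dim -/
theorem dim_exact (hfin : dim.d M ⊤ ≠ ⊤) {p W : Submodule R M} (h : p ≤ W) :
    dim.d M W = dim.d M p + dim.d (M ⧸ p) (W.map p.mkQ) := by
  have h1 : dim.d M ⊤ = dim.d M W + dim.d (M ⧸ W) ⊤ := dim.additivity M W
  have h2 : dim.d M ⊤ = dim.d M p + dim.d (M ⧸ p) ⊤ := dim.additivity M p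
  have h3 : dim.d (M ⧸ p) ⊤ =
      dim.d (M ⧸ p) (W.map p.mkQ) + dim.d ((M ⧸ p) ⧸ W.map p.mkQ) ⊤ := dim.additivity _ _
  have h4 : dim.d ((M ⧸ p) ⧸ W.map p.mkQ) ⊤ = dim.d (M ⧸ W) ⊤ :=
    dim.dim_top_equiv (Submodule.quotientQuotientEquivQuotient p W h)
  have hX : dim.d (M ⧸ W) ⊤ ≠ ⊤ := ne_top_of_le_ne_top hfin (dim.dim_quot_top_le W)
  have key : dim.d M W + dim.d (M ⧸ W) ⊤ =
      (dim.d M p + dim.d (M ⧸ p) (W.map p.mkQ)) + dim.d (M ⧸ W) ⊤ := by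
    rw [← h1, h2, h3, h4]; ring
  exact WithTop.add_right_cancel hX key

/-- rank of the image of a submodule under mkQ, ambient of finite type -/
theorem dim_map_mkQ_le [Module.Finite R M] (K : Submodule R M) (p : Submodule R M) :
    dim.d (M ⧸ K) (p.map K.mkQ) ≤ dim.d M p := by
  have hM : dim.d M ⊤ ≠ ⊤ := dim.dim_top_ne_top
  set A := M ⧸ p
  set B := M ⧸ K
  have hA : dim.d A ⊤ ≠ ⊤ := ne_top_of_le_ne_top hM (dim.dim_quot_top_le p)
  have hPK : dim.d (M ⧸ (p ⊔ K)) ⊤ ≠ ⊤ := ne_top_of_le_ne_top hM (dim.dim_quot_top_le _)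
  set Φ : M →ₗ[R] A × B := (p.mkQ).prod (K.mkQ) with hΦdef
  set S := LinearMap.range Φ with hSdef
  have hΨ1 : p ≤ Submodule.comap LinearMap.id (p ⊔ K) := le_sup_left
  have hΨ2 : K ≤ Submodule.comap LinearMap.id (p ⊔ K) := le_sup_right
  set Ψ : A × B →ₗ[R] M ⧸ (p ⊔ K) :=
    (p.mapQ (p ⊔ K) LinearMap.id hΨ1).comp (LinearMap.fst R A B) -
      (K.mapQ (p ⊔ K) LinearMap.id hΨ2).comp (LinearMap.snd R A B) with hΨdef
  have hΨapp : ∀ x y : M, Ψ (p.mkQ x, K.mkQ y) = (p ⊔ K).mkQ (x - y) := by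
    intro x y
    simp only [hΨdef, LinearMap.sub_apply, LinearMap.comp_apply, LinearMap.fst_apply,
      LinearMap.snd_apply, Submodule.mkQ_apply, Submodule.mapQ_apply, LinearMap.id_apply,
      Submodule.Quotient.mk_sub]
  have hker : LinearMap.ker Ψ = S := by
    ext z
    obtain ⟨a, b⟩ := z
    obtain ⟨x, rfl⟩ := p.mkQ_surjective a
    obtain ⟨y, rfl⟩ := K.mkQ_surjective b
    simp only [LinearMap.mem_ker, LinearMap.mem_range, hΨapp]
    constructor
    · intro hz
      rw [Submodule.mkQ_apply, Submodule.Quotient.mk_eq_zero] at hz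
      obtain ⟨u, hu, v, hv, huv⟩ := Submodule.mem_sup.mp hz
      refine ⟨x - u, ?_⟩
      have hx : p.mkQ (x - u) = p.mkQ x := by
        rw [Submodule.mkQ_apply, Submodule.mkQ_apply, Submodule.Quotient.eq]
        have hxu : (x - u) - x = -u := by abel
        rw [hxu]
        exact p.neg_mem hu
      have hy : K.mkQ (x - u) = K.mkQ y := by
        rw [Submodule.mkQ_apply, Submodule.mkQ_apply, Submodule.Quotient.eq]
        have hv' : v = x - y - u := by rw [← huv]; abel
        have hxy : (x - u) - y = v := by rw [hv']; abel
        rw [hxy]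
        exact hv
      show Φ (x - u) = (p.mkQ x, K.mkQ y)
      simp only [hΦdef, LinearMap.prod_apply, Pi.prod]
      rw [Prod.mk.injEq]
      exact ⟨hx, hy⟩
    · rintro ⟨w, hw⟩
      have hw1 : p.mkQ w = p.mkQ x := congrArg Prod.fst hw
      have hw2 : K.mkQ w = K.mkQ y := congrArg Prod.snd hw
      have h1 : x - w ∈ p := by
        have hthis : p.mkQ x = p.mkQ w := hw1.symm
        rwa [Submodule.mkQ_apply, Submodule.mkQ_apply, Submodule.Quotient.eq] at hthis
      have h2 : w - y ∈ K := by
        have hthis : K.mkQ w = K.mkQ y := hw2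
        rwa [Submodule.mkQ_apply, Submodule.mkQ_apply, Submodule.Quotient.eq] at hthis
      rw [Submodule.mkQ_apply, Submodule.Quotient.mk_eq_zero]
      have hxy : x - y = (x - w) + (w - y) := by abel
      rw [hxy]
      exact Submodule.add_mem _ ((le_sup_left : p ≤ p ⊔ K) h1) ((le_sup_right : K ≤ p ⊔ K) h2)
  have hΨsurj : Function.Surjective Ψ := by
    intro c
    obtain ⟨x, rfl⟩ := (p ⊔ K).mkQ_surjective c
    refine ⟨(p.mkQ x, K.mkQ 0), ?_⟩
    rw [hΨapp, sub_zero]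
  have hquot : dim.d ((A × B) ⧸ S) ⊤ = dim.d (M ⧸ (p ⊔ K)) ⊤ := by
    rw [← hker]
    exact dim.dim_top_equiv (Ψ.quotKerEquivOfSurjective hΨsurj)
  have hSfg : S.FG := by
    rw [hSdef, LinearMap.range_eq_map]
    exact (Module.finite_def.mp inferInstance).map Φ
  have step3 : dim.d (A × B) S ≤ dim.d M ⊤ := by
    calc dim.d (A × B) S ≤ dim.d ↥S (S.comap S.subtype) :=
          dim.dim_le_fg_ambient hSfg hSfg le_rfl
      _ = dim.d ↥S ⊤ := by rw [Submodule.comap_subtype_self]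
      _ = dim.d (M ⧸ LinearMap.ker Φ) ⊤ := (dim.dim_top_equiv (Φ.quotKerEquivRange)).symm
      _ ≤ dim.d M ⊤ := dim.dim_quot_top_le _
  have step1 : dim.d A ⊤ + dim.d B ⊤ = dim.d (A × B) ⊤ := by
    rw [← Submodule.prod_top]
    exact (dim.d_prod A B ⊤ ⊤).symm
  have step2 : dim.d (A × B) ⊤ = dim.d (A × B) S + dim.d ((A × B) ⧸ S) ⊤ := dim.additivity _ _
  have step4 : dim.d A ⊤ + dim.d B ⊤ ≤ dim.d M ⊤ + dim.d (M ⧸ (p ⊔ K)) ⊤ := by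
    rw [step1, step2, hquot]
    exact add_le_add_left step3 _
  have hmapsup : p.map K.mkQ = (p ⊔ K).map K.mkQ := by
    rw [Submodule.map_sup, Submodule.mkQ_map_self, sup_bot_eq]
  have step5 : dim.d B ⊤ = dim.d B (p.map K.mkQ) + dim.d (M ⧸ (p ⊔ K)) ⊤ := by
    have h5 : dim.d (B ⧸ p.map K.mkQ) ⊤ = dim.d (M ⧸ (p ⊔ K)) ⊤ := by
      rw [hmapsup]
      exact dim.dim_top_equiv (Submodule.quotientQuotientEquivQuotient K (p ⊔ K) le_sup_right)
    rw [← h5]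
    exact dim.additivity _ _
  have step6 : dim.d M ⊤ = dim.d M p + dim.d A ⊤ := dim.additivity M p
  rw [step5, step6] at step4
  have hfin2 : dim.d A ⊤ + dim.d (M ⧸ (p ⊔ K)) ⊤ ≠ ⊤ := ENNReal.add_ne_top.mpr ⟨hA, hPK⟩
  have step7 : (dim.d A ⊤ + dim.d (M ⧸ (p ⊔ K)) ⊤) + dim.d B (p.map K.mkQ) ≤
      (dim.d A ⊤ + dim.d (M ⧸ (p ⊔ K)) ⊤) + dim.d M p := by
    calc (dim.d A ⊤ + dim.d (M ⧸ (p ⊔ K)) ⊤) + dim.d B (p.map K.mkQ)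
        = dim.d A ⊤ + (dim.d B (p.map K.mkQ) + dim.d (M ⧸ (p ⊔ K)) ⊤) := by ring
      _ ≤ dim.d M p + dim.d A ⊤ + dim.d (M ⧸ (p ⊔ K)) ⊤ := step4
      _ = (dim.d A ⊤ + dim.d (M ⧸ (p ⊔ K)) ⊤) + dim.d M p := by ring
  exact (ENNReal.add_le_add_iff_left hfin2).mp step7

/-- rank of images under a surjection out of a finite module -/
theorem dim_map_le_of_surjective [Module.Finite R M] (φ : M →ₗ[R] N)
    (hφ : Function.Surjective φ) (p : Submodule R M) :
    dim.d N (p.map φ) ≤ dim.d M p := by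
  have hcomp : (φ.quotKerEquivOfSurjective hφ : (M ⧸ LinearMap.ker φ) →ₗ[R] N).comp
      (LinearMap.ker φ).mkQ = φ := by
    ext x; rfl
  have hmap : p.map φ = (p.map (LinearMap.ker φ).mkQ).map
      (φ.quotKerEquivOfSurjective hφ : (M ⧸ LinearMap.ker φ) →ₗ[R] N) := by
    rw [← Submodule.map_comp, hcomp]
  rw [hmap, ← dim.dim_equiv (φ.quotKerEquivOfSurjective hφ)]
  exact dim.dim_map_mkQ_le (LinearMap.ker φ) p

end Exact
end BivariantSylvesterRank

namespace BivariantSylvesterRank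
variable {R : Type u} [Ring R] (dim : BivariantSylvesterRank R)

section MapLe
variable {M N : Type u} [AddCommGroup M] [Module R M] [AddCommGroup N] [Module R N]

/-- General monotonicity of dim under homomorphisms. -/
theorem dim_map_le (φ : M →ₗ[R] N) (p : Submodule R M) :
    dim.d N (p.map φ) ≤ dim.d M p := by
  have fgcase : ∀ p : Submodule R M, p.FG → dim.d N (p.map φ) ≤ dim.d M p := by
    intro p hp
    rw [dim.continuity_inf M p hp]
    refine le_iInf ?_
    rintro ⟨q, hq, hpq⟩
    have hS : ∀ x ∈ q, φ x ∈ q.map φ := fun x hx => Submodule.mem_map_of_mem hx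
    haveI : Module.Finite R ↥q := Module.Finite.iff_fg.mpr hq
    have hmapfg : (q.map φ).FG := hq.map φ
    calc dim.d N (p.map φ) ≤ dim.d ↥(q.map φ) ((p.map φ).comap (q.map φ).subtype) :=
          dim.dim_le_fg_ambient (hp.map φ) hmapfg (Submodule.map_mono hpq)
      _ = dim.d ↥(q.map φ) ((p.comap q.subtype).map (φ.restrict hS)) := by
          rw [map_restrict_eq φ q p hpq hS]
      _ ≤ dim.d ↥q (p.comap q.subtype) :=
          dim.dim_map_le_of_surjective _ (restrict_surjective φ q hS) _
  rw [dim.continuity_sup N (p.map φ)]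
  refine iSup_le ?_
  rintro ⟨p₂, h2, hle⟩
  obtain ⟨p₁, h1fg, h1le, h2le⟩ := exists_fg_le_map φ h2 hle
  calc dim.d N p₂ ≤ dim.d N (p₁.map φ) := dim.dim_mono h2le
    _ ≤ dim.d M p₁ := fgcase p₁ h1fg
    _ ≤ dim.d M p := dim.dim_mono h1le

theorem dim_top_le_of_surjective (φ : M →ₗ[R] N) (hφ : Function.Surjective φ) :
    dim.d N ⊤ ≤ dim.d M ⊤ := by
  have h := dim.dim_map_le φ ⊤
  rwa [Submodule.map_top, LinearMap.range_eq_top.mpr hφ] at h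

end MapLe
end BivariantSylvesterRank

namespace BivariantSylvesterRank
variable {R : Type u} [Ring R] (dim : BivariantSylvesterRank R)

section QuotIneq
variable {M N : Type u} [AddCommGroup M] [Module R M] [AddCommGroup N] [Module R N]

/-- the canonical map `S⧸(p ∩ S) → M⧸p` -/
noncomputable def quotInto (S p : Submodule R M) : (↥S ⧸ p.comap S.subtype) →ₗ[R] M ⧸ p :=
  (p.comap S.subtype).mapQ p S.subtype le_rfl

theorem quotInto_injective (S p : Submodule R M) : Function.Injective (quotInto S p) := by
  intro a b hab
  obtain ⟨x, rfl⟩ := (p.comap S.subtype).mkQ_surjective a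
  obtain ⟨y, rfl⟩ := (p.comap S.subtype).mkQ_surjective b
  simp only [Submodule.mkQ_apply, quotInto, Submodule.mapQ_apply] at hab ⊢
  rw [Submodule.Quotient.eq] at hab ⊢
  simpa using hab

theorem quotInto_map (S p W' : Submodule R M) (hW' : W' ≤ S) :
    ((W'.comap S.subtype).map (p.comap S.subtype).mkQ).map (quotInto S p) =
      W'.map p.mkQ := by
  rw [quotInto, ← Submodule.map_comp, Submodule.mapQ_mkQ, Submodule.map_comp,
    Submodule.map_comap_subtype, inf_eq_right.mpr hW']

theorem quotInto_range (S p : Submodule R M) :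
    LinearMap.range (quotInto S p) = S.map p.mkQ := by
  have h1 : (⊤ : Submodule R (↥S ⧸ p.comap S.subtype)) =
      (⊤ : Submodule R ↥S).map (p.comap S.subtype).mkQ := by
    rw [Submodule.map_top, LinearMap.range_eq_top.mpr ((p.comap S.subtype).mkQ_surjective)]
  rw [LinearMap.range_eq_map, h1, ← Submodule.map_comp, quotInto, Submodule.mapQ_mkQ,
    Submodule.map_comp, Submodule.map_top, Submodule.range_subtype]

/-- lower additivity: `dim(p|M) + dim(W/p|M/p) ≤ dim(W|M)` for f.g. `p ≤ W`. -/
theorem dim_add_quot_le {p W : Submodule R M} (hp : p.FG) (hpW : p ≤ W) :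
    dim.d M p + dim.d (M ⧸ p) (W.map p.mkQ) ≤ dim.d M W := by
  haveI : Nonempty {p' : Submodule R (M ⧸ p) // p'.FG ∧ p' ≤ W.map p.mkQ} :=
    ⟨⟨⊥, Submodule.fg_bot, bot_le⟩⟩
  rw [dim.continuity_sup (M ⧸ p) (W.map p.mkQ), ENNReal.add_iSup]
  refine iSup_le ?_
  rintro ⟨V, hVfg, hVle⟩
  obtain ⟨W₀, hW₀fg, hW₀le, hVle₀⟩ := exists_fg_le_map p.mkQ hVfg hVle
  set W' := W₀ ⊔ p with hW'def
  have hW'fg : W'.FG := hW₀fg.sup hp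
  have hW'W : W' ≤ W := sup_le hW₀le hpW
  have hpW' : p ≤ W' := le_sup_right
  have hVle' : V ≤ W'.map p.mkQ := hVle₀.trans (Submodule.map_mono le_sup_left)
  have key : dim.d M p + dim.d (M ⧸ p) (W'.map p.mkQ) ≤ dim.d M W' := by
    rw [dim.continuity_inf M W' hW'fg]
    refine le_iInf ?_
    rintro ⟨q, hqfg, hW'q⟩
    haveI : Module.Finite R ↥q := Module.Finite.iff_fg.mpr hqfg
    have hpq : p ≤ q := hpW'.trans hW'q
    have hexact : dim.d ↥q (W'.comap q.subtype) = dim.d ↥q (p.comap q.subtype) +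
        dim.d (↥q ⧸ p.comap q.subtype)
          ((W'.comap q.subtype).map (p.comap q.subtype).mkQ) :=
      dim.dim_exact dim.dim_top_ne_top (Submodule.comap_mono hpW')
    have h1 : dim.d M p ≤ dim.d ↥q (p.comap q.subtype) :=
      dim.dim_le_fg_ambient hp hqfg hpq
    have h2 : dim.d (M ⧸ p) (W'.map p.mkQ) ≤
        dim.d (↥q ⧸ p.comap q.subtype) ((W'.comap q.subtype).map (p.comap q.subtype).mkQ) := by
      have := dim.dim_map_le (quotInto q p)
        ((W'.comap q.subtype).map (p.comap q.subtype).mkQ)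
      rwa [quotInto_map q p W' hW'q] at this
    rw [hexact]
    exact add_le_add h1 h2
  calc dim.d M p + dim.d (M ⧸ p) V
      ≤ dim.d M p + dim.d (M ⧸ p) (W'.map p.mkQ) := add_le_add_right (dim.dim_mono hVle') _
    _ ≤ dim.d M W' := key
    _ ≤ dim.d M W := dim.dim_mono hW'W

/-- upper additivity: `dim(W|M) ≤ dim(p|M) + dim(W/p|M/p)` for f.g. `p ≤ W`. -/
theorem dim_le_add_quot {p W : Submodule R M} (hp : p.FG) (hpW : p ≤ W) :
    dim.d M W ≤ dim.d M p + dim.d (M ⧸ p) (W.map p.mkQ) := by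
  rw [dim.continuity_sup M W]
  refine iSup_le ?_
  rintro ⟨W₁, hW₁fg, hW₁le⟩
  set W'' := W₁ ⊔ p with hW''def
  have hW''fg : W''.FG := hW₁fg.sup hp
  have hW''W : W'' ≤ W := sup_le hW₁le hpW
  have hpW'' : p ≤ W'' := le_sup_right
  have key : dim.d M W'' ≤ dim.d M p + dim.d (M ⧸ p) (W''.map p.mkQ) := by
    rw [dim.continuity_inf (M ⧸ p) (W''.map p.mkQ) (hW''fg.map _), ENNReal.add_iInf]
    refine le_iInf ?_
    rintro ⟨Q, hQfg, hQge⟩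
    rw [dim.continuity_inf M p hp, ENNReal.iInf_add]
    refine le_iInf ?_
    rintro ⟨q, hqfg, hpq⟩
    have hQtop : Q ≤ (⊤ : Submodule R M).map p.mkQ := by
      rw [Submodule.map_top, LinearMap.range_eq_top.mpr p.mkQ_surjective]
      exact le_top
    obtain ⟨L, hLfg, _, hQL⟩ := exists_fg_le_map p.mkQ hQfg hQtop
    set S := q ⊔ W'' ⊔ L with hSdef
    have hSfg : S.FG := (hqfg.sup hW''fg).sup hLfg
    haveI : Module.Finite R ↥S := Module.Finite.iff_fg.mpr hSfg
    have hqS : q ≤ S := le_sup_of_le_left le_sup_left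
    have hW''S : W'' ≤ S := le_sup_of_le_left le_sup_right
    have hLS : L ≤ S := le_sup_right
    have hpS : p ≤ S := hpq.trans hqS
    -- inside S
    have hexact : dim.d ↥S (W''.comap S.subtype) = dim.d ↥S (p.comap S.subtype) +
        dim.d (↥S ⧸ p.comap S.subtype)
          ((W''.comap S.subtype).map (p.comap S.subtype).mkQ) :=
      dim.dim_exact dim.dim_top_ne_top (Submodule.comap_mono hpW'')
    have hstart : dim.d M W'' ≤ dim.d ↥S (W''.comap S.subtype) :=
      dim.dim_le_fg_ambient hW''fg hSfg hW''S
    -- first summand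
    have hfirst : dim.d ↥S (p.comap S.subtype) ≤ dim.d ↥q (p.comap q.subtype) := by
      have hmap : (p.comap S.subtype).map S.subtype = p := by
        rw [Submodule.map_comap_subtype, inf_eq_right.mpr hpS]
      have h := dim.dim_le_of_injective S.subtype (Submodule.injective_subtype S)
        (fg_comap_subtype hpS hp) hqfg
        (by rw [hmap]; exact hpq) (by rw [Submodule.range_subtype]; exact hqS)
      rwa [hmap] at h
    -- second summand
    have hsecond : dim.d (↥S ⧸ p.comap S.subtype)
        ((W''.comap S.subtype).map (p.comap S.subtype).mkQ) ≤
        dim.d ↥Q ((W''.map p.mkQ).comap Q.subtype) := by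
      have hmapZ := quotInto_map S p W'' hW''S
      have hZfg : ((W''.comap S.subtype).map (p.comap S.subtype).mkQ).FG :=
        (fg_comap_subtype hW''S hW''fg).map _
      have h := dim.dim_le_of_injective (quotInto S p) (quotInto_injective S p)
        hZfg hQfg (by rw [hmapZ]; exact hQge)
        (by rw [quotInto_range]
            exact hQL.trans (Submodule.map_mono hLS))
      rwa [hmapZ] at h
    calc dim.d M W'' ≤ dim.d ↥S (W''.comap S.subtype) := hstart
      _ = _ := hexact
      _ ≤ dim.d ↥q (p.comap q.subtype) + dim.d ↥Q ((W''.map p.mkQ).comap Q.subtype) :=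
          add_le_add hfirst hsecond
  calc dim.d M W₁ ≤ dim.d M W'' := dim.dim_mono le_sup_left
    _ ≤ dim.d M p + dim.d (M ⧸ p) (W''.map p.mkQ) := key
    _ ≤ dim.d M p + dim.d (M ⧸ p) (W.map p.mkQ) :=
        add_le_add_right (dim.dim_mono (Submodule.map_mono hW''W)) _

end QuotIneq
end BivariantSylvesterRank

namespace BivariantSylvesterRank
variable {R : Type u} [Ring R] (dim : BivariantSylvesterRank R)

section Extraction

theorem exists_le_add_of_iSup {ι : Sort*} [Nonempty ι] {F : ι → ℝ≥0∞} {x : ℝ≥0∞}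
    (hx : x = ⨆ i, F i) (hfin : x ≠ ⊤) {ε : ℝ≥0∞} (hε : ε ≠ 0) : ∃ i, x ≤ F i + ε := by
  rcases eq_or_ne x 0 with h0 | h0
  · exact ⟨Classical.arbitrary ι, by rw [h0]; exact zero_le⟩
  · have hlt : x - ε < x := ENNReal.sub_lt_self hfin h0 hε
    rw [hx] at hlt
    obtain ⟨i, hi⟩ := lt_iSup_iff.mp hlt
    refine ⟨i, ?_⟩
    rw [hx]
    exact tsub_le_iff_right.mp hi.le

theorem exists_iInf_le_add {ι : Sort*} {F : ι → ℝ≥0∞} {x : ℝ≥0∞}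
    (hx : x = ⨅ i, F i) (hfin : x ≠ ⊤) {ε : ℝ≥0∞} (hε : ε ≠ 0) : ∃ i, F i ≤ x + ε := by
  have hlt : ⨅ i, F i < x + ε := by
    rw [← hx]
    exact ENNReal.lt_add_right hfin hε
  obtain ⟨i, hi⟩ := iInf_lt_iff.mp hlt
  exact ⟨i, hi.le⟩

variable {M N : Type u} [AddCommGroup M] [Module R M] [AddCommGroup N] [Module R N]

theorem exists_fg_map_eq (φ : M →ₗ[R] N) {Q : Submodule R N}
    (hQ : Q.FG) (h : Q ≤ LinearMap.range φ) :
    ∃ P : Submodule R M, P.FG ∧ P.map φ = Q := by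
  obtain ⟨s, rfl⟩ := hQ
  have hmem : ∀ x : ↥(↑s : Set N), ∃ y, φ y = (x : N) :=
    fun x => h (Submodule.subset_span x.2)
  choose g hg using hmem
  refine ⟨Submodule.span R (Set.range g), Submodule.fg_span (Set.finite_range g), ?_⟩
  rw [Submodule.map_span]
  congr 1
  ext z
  constructor
  · rintro ⟨_, ⟨x, rfl⟩, rfl⟩
    rw [hg x]
    exact x.2
  · intro hz
    exact ⟨g ⟨z, hz⟩, ⟨⟨z, hz⟩, rfl⟩, hg ⟨z, hz⟩⟩

end Extraction
end BivariantSylvesterRank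

open BivariantSylvesterRank

/-- continuity under direct limits. Let `dim(·|·)` be a bivariant
Sylvester module rank function for `R`, let `(G j, f)` be a direct system of `R`-modules
over a directed set `J` with direct limit `M_∞`, and let `M` be an `R`-module with
compatible maps `α j : M → G j` and `αlim : M → M_∞`. If `dim(im (α i)|G i) < +∞` for some
`i`, then `dim(im αlim|M_∞) = lim_j dim(im (α j)|G j) = inf_j dim(im (α j)|G j)`. -/
theorem bivariantSylvesterRank_directLimit (R : Type u) [Ring R]
    (dim : BivariantSylvesterRank R)
    (J : Type u) [Preorder J] [IsDirected J (· ≤ ·)] [Nonempty J] [DecidableEq J]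
    (G : J → Type u) [∀ j, AddCommGroup (G j)] [∀ j, Module R (G j)]
    (f : ∀ i j, i ≤ j → G i →ₗ[R] G j) [DirectedSystem G (fun i j h => f i j h)]
    (M : Type u) [AddCommGroup M] [Module R M]
    (α : ∀ j, M →ₗ[R] G j) (αlim : M →ₗ[R] Module.DirectLimit G f)
    (hcompat : ∀ (i j : J) (h : i ≤ j), (f i j h).comp (α i) = α j)
    (hcompat' : ∀ j : J, (Module.DirectLimit.of R J G f j).comp (α j) = αlim)
    (hfin : ∃ i : J, dim.d (G i) (LinearMap.range (α i)) < ⊤) :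
    (dim.d (Module.DirectLimit G f) (LinearMap.range αlim) =
        ⨅ j : J, dim.d (G j) (LinearMap.range (α j))) ∧
      Filter.Tendsto (fun j : J => dim.d (G j) (LinearMap.range (α j))) Filter.atTop
        (nhds (dim.d (Module.DirectLimit G f) (LinearMap.range αlim))) := by
  classical
  set DL := Module.DirectLimit G f with hDLdef
  set dj : J → ℝ≥0∞ := fun j => dim.d (G j) (LinearMap.range (α j)) with hdjdef
  set T : ℝ≥0∞ := dim.d DL (LinearMap.range αlim) with hTdef
  have hrange : ∀ (i j : J) (h : i ≤ j),
      LinearMap.range (α j) = (LinearMap.range (α i)).map (f i j h) := by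
    intro i j h
    rw [← hcompat i j h, LinearMap.range_comp]
  have hrange' : ∀ j : J,
      LinearMap.range αlim = (LinearMap.range (α j)).map (Module.DirectLimit.of R J G f j) := by
    intro j
    rw [← hcompat' j, LinearMap.range_comp]
  have hA : Antitone dj := by
    intro i j hij
    show dim.d (G j) _ ≤ dim.d (G i) _
    rw [hrange i j hij]
    exact dim.dim_map_le _ _
  have hB : ∀ j, T ≤ dj j := by
    intro j
    show dim.d DL _ ≤ dim.d (G j) _
    rw [hrange' j]
    exact dim.dim_map_le _ _
  have hC : (⨅ j, dj j) ≤ T := by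
    obtain ⟨i₀, hfin⟩ := hfin
    set W : Submodule R (G i₀) := LinearMap.range (α i₀) with hWdef
    have ha : dim.d (G i₀) W ≠ ⊤ := hfin.ne
    refine ENNReal.le_of_forall_pos_le_add ?_
    intro ε hε _
    set δ : ℝ≥0∞ := (ε : ℝ≥0∞) / 4 with hδdef
    have hδ0 : δ ≠ 0 := by
      rw [hδdef]
      simp only [ne_eq, ENNReal.div_eq_zero_iff]
      push_neg
      exact ⟨by exact_mod_cast hε.ne', by norm_num⟩
    -- Step 1 : choose a good f.g. p ≤ W
    haveI : Nonempty {p' : Submodule R (G i₀) // p'.FG ∧ p' ≤ W} :=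
      ⟨⟨⊥, Submodule.fg_bot, bot_le⟩⟩
    obtain ⟨⟨p, hpfg, hpW⟩, hp⟩ :=
      exists_le_add_of_iSup (dim.continuity_sup (G i₀) W) ha hδ0
    have hdp_ne : dim.d (G i₀) p ≠ ⊤ := ne_top_of_le_ne_top ha (dim.dim_mono hpW)
    have hquot_small : dim.d (G i₀ ⧸ p) (W.map p.mkQ) ≤ δ := by
      have h8 := dim.dim_add_quot_le hpfg hpW
      exact (ENNReal.add_le_add_iff_left hdp_ne).mp (h8.trans hp)
    -- Step 2 : uniform bound d_j ≤ d(p_j) + δ for j ≥ i₀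
    have hstep2 : ∀ (j : J) (h : i₀ ≤ j),
        dj j ≤ dim.d (G j) (p.map (f i₀ j h)) + δ := by
      intro j h
      have hWj : LinearMap.range (α j) = W.map (f i₀ j h) := hrange i₀ j h
      have hpj : p.map (f i₀ j h) ≤ LinearMap.range (α j) := by
        rw [hWj]; exact Submodule.map_mono hpW
      have h6 := dim.dim_le_add_quot (hpfg.map (f i₀ j h)) hpj
      have hψle : p ≤ (p.map (f i₀ j h)).comap (f i₀ j h) := Submodule.le_comap_map _ _
      have hψmap : ((W.map p.mkQ).map (p.mapQ (p.map (f i₀ j h)) (f i₀ j h) hψle)) =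
          (LinearMap.range (α j)).map (p.map (f i₀ j h)).mkQ := by
        rw [← Submodule.map_comp, Submodule.mapQ_mkQ, Submodule.map_comp, ← hWj]
      have h7 : dim.d (G j ⧸ p.map (f i₀ j h))
          ((LinearMap.range (α j)).map (p.map (f i₀ j h)).mkQ) ≤
          dim.d (G i₀ ⧸ p) (W.map p.mkQ) := by
        rw [← hψmap]
        exact dim.dim_map_le _ _
      calc dj j ≤ dim.d (G j) (p.map (f i₀ j h)) + dim.d (G j ⧸ p.map (f i₀ j h))
            ((LinearMap.range (α j)).map (p.map (f i₀ j h)).mkQ) := h6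
        _ ≤ dim.d (G j) (p.map (f i₀ j h)) + δ :=
            add_le_add_right (h7.trans hquot_small) _
    -- Step 3 : the f.g. piece in the limit
    set pinf : Submodule R DL := p.map (Module.DirectLimit.of R J G f i₀) with hpinfdef
    set b : ℝ≥0∞ := dim.d DL pinf with hbdef
    have hofcomp : ∀ (i j : J) (h : i ≤ j),
        (Module.DirectLimit.of R J G f j).comp (f i j h) = Module.DirectLimit.of R J G f i := by
      intro i j h
      ext x
      exact Module.DirectLimit.of_f
    have hbp : b ≤ dim.d (G i₀) p := dim.dim_map_le _ _
    have hbfin : b ≠ ⊤ := ne_top_of_le_ne_top hdp_ne hbp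
    have hbT : b ≤ T := by
      have hle : pinf ≤ LinearMap.range αlim := by
        rw [hrange' i₀]
        exact Submodule.map_mono hpW
      exact dim.dim_mono hle
    have hpinffg : pinf.FG := hpfg.map _
    obtain ⟨⟨Q, hQfg, hQge⟩, hQ⟩ :=
      exists_iInf_le_add (dim.continuity_inf DL pinf hpinffg) hbfin hδ0
    -- choose k ≥ i₀ with Q in the range of (of k)
    obtain ⟨s, hs⟩ := hQfg
    choose idx elt helt using fun x : ↥(↑s : Set DL) => Module.DirectLimit.exists_of (x : DL)
    obtain ⟨k₀, hk₀⟩ := Finset.exists_le (Finset.image idx Finset.univ)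
    obtain ⟨k, hk₀k, hi₀k⟩ := exists_ge_ge k₀ i₀
    have hidxk : ∀ x : ↥(↑s : Set DL), idx x ≤ k := fun x =>
      (hk₀ _ (Finset.mem_image_of_mem idx (Finset.mem_univ x))).trans hk₀k
    have hQrange : Q ≤ LinearMap.range (Module.DirectLimit.of R J G f k) := by
      rw [← hs, Submodule.span_le]
      intro z hz
      refine ⟨f (idx ⟨z, hz⟩) k (hidxk ⟨z, hz⟩) (elt ⟨z, hz⟩), ?_⟩
      rw [Module.DirectLimit.of_f]
      exact helt ⟨z, hz⟩
    have hQfg' : Q.FG := ⟨s, hs⟩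
    obtain ⟨P, hPfg, hPmap⟩ := exists_fg_map_eq (Module.DirectLimit.of R J G f k) hQfg' hQrange
    set pk : Submodule R (G k) := p.map (f i₀ k hi₀k) with hpkdef
    set Qk : Submodule R (G k) := P ⊔ pk with hQkdef
    have hQkfg : Qk.FG := hPfg.sup (hpfg.map _)
    have hpkQk : pk ≤ Qk := le_sup_right
    have hQkmap : Qk.map (Module.DirectLimit.of R J G f k) = Q := by
      rw [hQkdef, Submodule.map_sup, hPmap]
      have hpkinf : pk.map (Module.DirectLimit.of R J G f k) = pinf := by
        rw [hpkdef, ← Submodule.map_comp, hofcomp i₀ k hi₀k]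
      rw [hpkinf]
      exact sup_eq_left.mpr hQge
    haveI : Module.Finite R ↥Qk := Module.Finite.iff_fg.mpr hQkfg
    have hDk : dim.d ↥Qk ⊤ ≠ ⊤ := dim.dim_top_ne_top
    have hsinfmem : ∀ x ∈ Qk, Module.DirectLimit.of R J G f k x ∈ Q := by
      intro x hx
      rw [← hQkmap]
      exact Submodule.mem_map_of_mem hx
    set sinf : ↥Qk →ₗ[R] ↥Q := (Module.DirectLimit.of R J G f k).restrict hsinfmem with hsinfdef
    have hsinfsurj : Function.Surjective sinf := by
      rintro ⟨y, hy⟩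
      rw [← hQkmap] at hy
      obtain ⟨x, hx, rfl⟩ := hy
      exact ⟨⟨x, hx⟩, rfl⟩
    set Ninf := LinearMap.ker sinf with hNinfdef
    have hNtop : dim.d ↥Qk Ninf ≠ ⊤ := ne_top_of_le_ne_top hDk (dim.dim_le_top Ninf)
    haveI : Nonempty {r : Submodule R ↥Qk // r.FG ∧ r ≤ Ninf} :=
      ⟨⟨⊥, Submodule.fg_bot, bot_le⟩⟩
    obtain ⟨⟨r, hrfg, hrle⟩, hr⟩ :=
      exists_le_add_of_iSup (dim.continuity_sup ↥Qk Ninf) hNtop hδ0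
    obtain ⟨t, htspan⟩ := hrfg
    have hkill : ∀ x : ↥(↑t : Set ↥Qk), ∃ (j : J) (hkj : k ≤ j),
        f k j hkj ((x : ↥Qk) : G k) = 0 := by
      intro x
      have hxr : (x : ↥Qk) ∈ r := by
        rw [← htspan]
        exact Submodule.subset_span x.2
      have hxN : sinf (x : ↥Qk) = 0 := LinearMap.mem_ker.mp (hrle hxr)
      have hof : Module.DirectLimit.of R J G f k ((x : ↥Qk) : G k) = 0 :=
        congrArg Subtype.val hxN
      exact Module.DirectLimit.of.zero_exact hof
    choose jx hjx hzero using hkill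
    obtain ⟨j₀, hj₀⟩ := Finset.exists_le (Finset.image jx Finset.univ)
    obtain ⟨j, hj₀j, hkj⟩ := exists_ge_ge j₀ k
    have hjxj : ∀ x, jx x ≤ j := fun x =>
      (hj₀ _ (Finset.mem_image_of_mem jx (Finset.mem_univ x))).trans hj₀j
    have hi₀j : i₀ ≤ j := hi₀k.trans hkj
    set Qj : Submodule R (G j) := Qk.map (f k j hkj) with hQjdef
    have hQjfg : Qj.FG := hQkfg.map _
    set pj : Submodule R (G j) := p.map (f i₀ j hi₀j) with hpjdef
    have hfcomp : (f k j hkj).comp (f i₀ k hi₀k) = f i₀ j hi₀j := by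
      ext x
      exact DirectedSystem.map_map (f := fun i j h => f i j h) hi₀k hkj x
    have hpjpk : pj = pk.map (f k j hkj) := by
      rw [hpjdef, hpkdef, ← Submodule.map_comp, hfcomp]
    have hpjQj : pj ≤ Qj := by
      rw [hpjpk, hQjdef]
      exact Submodule.map_mono hpkQk
    have hsigjmem : ∀ x ∈ Qk, f k j hkj x ∈ Qj := fun x hx => Submodule.mem_map_of_mem hx
    set sigj : ↥Qk →ₗ[R] ↥Qj := (f k j hkj).restrict hsigjmem with hsigjdef
    have hsigjsurj : Function.Surjective sigj := restrict_surjective _ _ _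
    set Nj := LinearMap.ker sigj with hNjdef
    have hrNj : r ≤ Nj := by
      rw [← htspan, Submodule.span_le]
      intro x hx
      have h1 := hzero ⟨x, hx⟩
      have h2 := DirectedSystem.map_map (f := fun i j h => f i j h)
        (hjx ⟨x, hx⟩) (hjxj ⟨x, hx⟩) ((x : ↥Qk) : G k)
      rw [h1, map_zero] at h2
      have h3 : f k j hkj ((x : ↥Qk) : G k) = 0 := h2.symm
      have h4 : sigj x = 0 := Subtype.ext h3
      simp only [SetLike.mem_coe, hNjdef, LinearMap.mem_ker]
      exact h4
    have hNle : dim.d ↥Qk Ninf ≤ dim.d ↥Qk Nj + δ :=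
      hr.trans (add_le_add_left (dim.dim_mono hrNj) δ)
    have hujQ : dim.d ↥Qj ⊤ = dim.d (↥Qk ⧸ Nj) ⊤ :=
      (dim.dim_top_equiv (sigj.quotKerEquivOfSurjective hsigjsurj)).symm
    have huQ : dim.d ↥Q ⊤ = dim.d (↥Qk ⧸ Ninf) ⊤ :=
      (dim.dim_top_equiv (sinf.quotKerEquivOfSurjective hsinfsurj)).symm
    have hadd_j : dim.d ↥Qk ⊤ = dim.d ↥Qk Nj + dim.d ↥Qj ⊤ := by
      rw [hujQ]
      exact dim.additivity ↥Qk Nj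
    have hadd_inf : dim.d ↥Qk ⊤ = dim.d ↥Qk Ninf + dim.d ↥Q ⊤ := by
      rw [huQ]
      exact dim.additivity ↥Qk Ninf
    have hNjne : dim.d ↥Qk Nj ≠ ⊤ := ne_top_of_le_ne_top hDk (dim.dim_le_top Nj)
    have huj : dim.d ↥Qj ⊤ ≤ dim.d ↥Q ⊤ + δ := by
      have h1 : dim.d ↥Qk Nj + dim.d ↥Qj ⊤ ≤ dim.d ↥Qk Nj + (dim.d ↥Q ⊤ + δ) := by
        calc dim.d ↥Qk Nj + dim.d ↥Qj ⊤ = dim.d ↥Qk Ninf + dim.d ↥Q ⊤ := by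
              rw [← hadd_j, hadd_inf]
          _ ≤ (dim.d ↥Qk Nj + δ) + dim.d ↥Q ⊤ := add_le_add_left hNle _
          _ = dim.d ↥Qk Nj + (dim.d ↥Q ⊤ + δ) := by ring
      exact (ENNReal.add_le_add_iff_left hNjne).mp h1
    set cj := dim.d ↥Qj (pj.comap Qj.subtype) with hcjdef
    set cQ := dim.d ↥Q (pinf.comap Q.subtype) with hcQdef
    have haddj : dim.d ↥Qj ⊤ = cj + dim.d (↥Qj ⧸ pj.comap Qj.subtype) ⊤ := dim.additivity _ _
    have haddQ : dim.d ↥Q ⊤ = cQ + dim.d (↥Q ⧸ pinf.comap Q.subtype) ⊤ := dim.additivity _ _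
    have hQjQ : Qj.map (Module.DirectLimit.of R J G f j) = Q := by
      rw [hQjdef, ← Submodule.map_comp, hofcomp k j hkj, hQkmap]
    have hpjinf : pj.map (Module.DirectLimit.of R J G f j) = pinf := by
      rw [hpjdef, ← Submodule.map_comp, hofcomp i₀ j hi₀j]
    have hsig'mem : ∀ x ∈ Qj, Module.DirectLimit.of R J G f j x ∈ Q := by
      intro x hx
      rw [← hQjQ]
      exact Submodule.mem_map_of_mem hx
    set sig' : ↥Qj →ₗ[R] ↥Q := (Module.DirectLimit.of R J G f j).restrict hsig'mem with hsig'def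
    have hsig'surj : Function.Surjective sig' := by
      rintro ⟨y, hy⟩
      rw [← hQjQ] at hy
      obtain ⟨x, hx, rfl⟩ := hy
      exact ⟨⟨x, hx⟩, rfl⟩
    have hsig'le : pj.comap Qj.subtype ≤ (pinf.comap Q.subtype).comap sig' := by
      intro x hx
      have hx' : (x : G j) ∈ pj := hx
      have hmem : Module.DirectLimit.of R J G f j (x : G j) ∈ pinf := by
        rw [← hpjinf]
        exact Submodule.mem_map_of_mem hx'
      exact hmem
    set τ := (pj.comap Qj.subtype).mapQ (pinf.comap Q.subtype) sig' hsig'le with hτdef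
    have hτsurj : Function.Surjective τ := by
      intro c
      obtain ⟨y, rfl⟩ := (pinf.comap Q.subtype).mkQ_surjective c
      obtain ⟨x, rfl⟩ := hsig'surj y
      refine ⟨(pj.comap Qj.subtype).mkQ x, ?_⟩
      rw [hτdef, Submodule.mkQ_apply, Submodule.mkQ_apply, Submodule.mapQ_apply]
    have hXle : dim.d (↥Q ⧸ pinf.comap Q.subtype) ⊤ ≤ dim.d (↥Qj ⧸ pj.comap Qj.subtype) ⊤ :=
      dim.dim_top_le_of_surjective τ hτsurj
    have hXjne : dim.d (↥Qj ⧸ pj.comap Qj.subtype) ⊤ ≠ ⊤ := by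
      refine ne_top_of_le_ne_top hDk ?_
      calc dim.d (↥Qj ⧸ pj.comap Qj.subtype) ⊤ ≤ dim.d ↥Qj ⊤ := dim.dim_quot_top_le _
        _ = dim.d (↥Qk ⧸ Nj) ⊤ := hujQ
        _ ≤ dim.d ↥Qk ⊤ := dim.dim_quot_top_le _
    have hcj : cj ≤ cQ + δ := by
      have h1 : cj + dim.d (↥Qj ⧸ pj.comap Qj.subtype) ⊤ ≤
          (cQ + δ) + dim.d (↥Qj ⧸ pj.comap Qj.subtype) ⊤ := by
        calc cj + dim.d (↥Qj ⧸ pj.comap Qj.subtype) ⊤ = dim.d ↥Qj ⊤ := haddj.symm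
          _ ≤ dim.d ↥Q ⊤ + δ := huj
          _ = cQ + dim.d (↥Q ⧸ pinf.comap Q.subtype) ⊤ + δ := by rw [haddQ]
          _ ≤ cQ + dim.d (↥Qj ⧸ pj.comap Qj.subtype) ⊤ + δ :=
              add_le_add_left (add_le_add_right hXle _) _
          _ = (cQ + δ) + dim.d (↥Qj ⧸ pj.comap Qj.subtype) ⊤ := by ring
      exact (ENNReal.add_le_add_iff_right hXjne).mp h1
    have hfinal : dj j ≤ T + δ + δ + δ := by
      have h1 : dim.d (G j) pj ≤ cj := dim.dim_le_fg_ambient (hpfg.map _) hQjfg hpjQj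
      calc dj j ≤ dim.d (G j) pj + δ := hstep2 j hi₀j
        _ ≤ (cQ + δ) + δ := add_le_add_left (h1.trans hcj) δ
        _ ≤ ((b + δ) + δ) + δ := by
            exact add_le_add_left (add_le_add_left (hQ.trans le_rfl) _) _
        _ = b + δ + δ + δ := by ring
        _ ≤ T + δ + δ + δ := by
            exact add_le_add_left (add_le_add_left (add_le_add_left hbT _) _) _
    have h3δ : δ + δ + δ ≤ (ε : ℝ≥0∞) := by
      have h4 : δ + δ + δ + δ = (ε : ℝ≥0∞) := by
        rw [hδdef, show ((ε : ℝ≥0∞) / 4 + (ε : ℝ≥0∞) / 4 + (ε : ℝ≥0∞) / 4 + (ε : ℝ≥0∞) / 4)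
          = 4 * ((ε : ℝ≥0∞) / 4) by ring]
        exact ENNReal.mul_div_cancel' (by norm_num) (by norm_num)
      calc δ + δ + δ ≤ δ + δ + δ + δ := le_add_right le_rfl
        _ = _ := h4
    calc (⨅ j', dj j') ≤ dj j := iInf_le _ j
      _ ≤ T + δ + δ + δ := hfinal
      _ = T + (δ + δ + δ) := by ring
      _ ≤ T + (ε : ℝ≥0∞) := add_le_add_right h3δ T
  have heq : T = ⨅ j, dj j := le_antisymm (le_iInf hB) hC
  refine ⟨heq, ?_⟩
  rw [heq]
  exact tendsto_atTop_iInf hA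
end Equivs
end

section
/- Let rk be an extended Sylvester map rank function for a unital ring R. For any R-module maps α : M₁ → M₃, β : M₂ → M₄, γ : M₁ → M₄, the block upper-triangular map [[α, γ],[0, β]] : M₁ ⊕ M₂ → M₃ ⊕ M₄ satisfies rk([[α, γ],[0, β]]) ≥ rk(α) + rk(β). -/
universe u
open scoped NNReal ENNReal

/-- An extended Sylvester map rank function for a unital ring `R`: an `ℝ≥0∞`-valued function
on all maps between left `R`-modules, satisfying normalization, submultiplicativity,
direct sum additivity, two continuity conditions with respect to direct limits, and
additivity `rk(id_{M₂}) = rk(α) + rk(id_{coker α})`. -/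
structure ExtendedSylvesterMapRank (R : Type u) [Ring R] where
  r : ∀ {M N : Type u} [AddCommGroup M] [Module R M] [AddCommGroup N] [Module R N],
      (M →ₗ[R] N) → ℝ≥0∞
  r_zero : ∀ (M N : Type u) [AddCommGroup M] [Module R M] [AddCommGroup N] [Module R N],
      r (0 : M →ₗ[R] N) = 0
  r_id_ring : r (LinearMap.id : R →ₗ[R] R) = 1
  r_comp : ∀ {M N P : Type u} [AddCommGroup M] [Module R M] [AddCommGroup N] [Module R N]
      [AddCommGroup P] [Module R P] (α : M →ₗ[R] N) (β : N →ₗ[R] P),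
      r (β.comp α) ≤ min (r α) (r β)
  r_prodMap : ∀ {M N P Q : Type u} [AddCommGroup M] [Module R M] [AddCommGroup N] [Module R N]
      [AddCommGroup P] [Module R P] [AddCommGroup Q] [Module R Q]
      (α : M →ₗ[R] N) (β : P →ₗ[R] Q),
      r (α.prodMap β) = r α + r β
  continuity_from : ∀ (J : Type u) [Preorder J] [IsDirected J (· ≤ ·)] [Nonempty J]
      [DecidableEq J] (G : J → Type u) [∀ j, AddCommGroup (G j)] [∀ j, Module R (G j)]
      (f : ∀ i j, i ≤ j → G i →ₗ[R] G j) [DirectedSystem G (fun i j h => f i j h)]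
      (M : Type u) [AddCommGroup M] [Module R M]
      (α : ∀ j, G j →ₗ[R] M) (αlim : Module.DirectLimit G f →ₗ[R] M),
      (∀ (i j : J) (h : i ≤ j), (α j).comp (f i j h) = α i) →
      (∀ j : J, αlim.comp (Module.DirectLimit.of R J G f j) = α j) →
      Filter.Tendsto (fun j => r (α j)) Filter.atTop (nhds (r αlim))
  continuity_to : ∀ (J : Type u) [Preorder J] [IsDirected J (· ≤ ·)] [Nonempty J]
      [DecidableEq J] (G : J → Type u) [∀ j, AddCommGroup (G j)] [∀ j, Module R (G j)]
      (f : ∀ i j, i ≤ j → G i →ₗ[R] G j) [DirectedSystem G (fun i j h => f i j h)]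
      (M : Type u) [AddCommGroup M] [Module R M], Module.Finite R M →
      ∀ (α : ∀ j, M →ₗ[R] G j) (αlim : M →ₗ[R] Module.DirectLimit G f),
      (∀ (i j : J) (h : i ≤ j), (f i j h).comp (α i) = α j) →
      (∀ j : J, (Module.DirectLimit.of R J G f j).comp (α j) = αlim) →
      Filter.Tendsto (fun j => r (α j)) Filter.atTop (nhds (r αlim))
  additivity : ∀ {M N : Type u} [AddCommGroup M] [Module R M] [AddCommGroup N] [Module R N]
      (α : M →ₗ[R] N),
      r (LinearMap.id : N →ₗ[R] N) =
        r α + r (LinearMap.id : (N ⧸ LinearMap.range α) →ₗ[R] (N ⧸ LinearMap.range α))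

namespace ExtendedSylvesterMapRank

open LinearMap Submodule Function Filter

variable {R : Type u} [Ring R] (rk : ExtendedSylvesterMapRank R)

section Basic

variable {M N P : Type u} [AddCommGroup M] [Module R M] [AddCommGroup N] [Module R N]
  [AddCommGroup P] [Module R P]

lemma r_comp_le_left (α : M →ₗ[R] N) (β : N →ₗ[R] P) : rk.r (β ∘ₗ α) ≤ rk.r β :=
  (rk.r_comp α β).trans (min_le_right _ _)

lemma r_comp_le_right (α : M →ₗ[R] N) (β : N →ₗ[R] P) : rk.r (β ∘ₗ α) ≤ rk.r α :=
  (rk.r_comp α β).trans (min_le_left _ _)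

lemma r_le_id_left (α : M →ₗ[R] N) : rk.r α ≤ rk.r (LinearMap.id : M →ₗ[R] M) := by
  have h := r_comp_le_right rk (LinearMap.id : M →ₗ[R] M) α
  simpa using h

lemma r_le_id_right (α : M →ₗ[R] N) : rk.r α ≤ rk.r (LinearMap.id : N →ₗ[R] N) := by
  have h := r_comp_le_left rk α (LinearMap.id : N →ₗ[R] N)
  simpa using h

lemma r_subsingleton [Subsingleton N] (α : M →ₗ[R] N) : rk.r α = 0 := by
  have h : α = 0 := by ext x; exact Subsingleton.elim _ _
  rw [h, rk.r_zero]

lemma r_surj (α : M →ₗ[R] N) (h : Function.Surjective α) :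
    rk.r (LinearMap.id : N →ₗ[R] N) = rk.r α := by
  haveI hq : Subsingleton (N ⧸ LinearMap.range α) := by
    rw [Submodule.Quotient.subsingleton_iff]
    exact LinearMap.range_eq_top.mpr h
  have hadd := rk.additivity α
  rw [r_subsingleton rk (LinearMap.id : (N ⧸ LinearMap.range α) →ₗ[R] _)] at hadd
  simpa using hadd

lemma d_congr (e : M ≃ₗ[R] N) :
    rk.r (LinearMap.id : M →ₗ[R] M) = rk.r (LinearMap.id : N →ₗ[R] N) := by
  have h1 : (LinearMap.id : M →ₗ[R] M) = (e.symm : N →ₗ[R] M) ∘ₗ (e : M →ₗ[R] N) := by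
    ext x; simp
  have h2 : (LinearMap.id : N →ₗ[R] N) = (e : M →ₗ[R] N) ∘ₗ (e.symm : N →ₗ[R] M) := by
    ext x; simp
  apply le_antisymm
  · conv_lhs => rw [h1]
    exact (r_comp_le_right rk _ _).trans (r_le_id_right rk _)
  · conv_lhs => rw [h2]
    exact (r_comp_le_right rk _ _).trans (r_le_id_right rk _)

lemma d_prod (M N : Type u) [AddCommGroup M] [Module R M] [AddCommGroup N] [Module R N] :
    rk.r (LinearMap.id : (M × N) →ₗ[R] (M × N)) =
      rk.r (LinearMap.id : M →ₗ[R] M) + rk.r (LinearMap.id : N →ₗ[R] N) := by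
  rw [← rk.r_prodMap (LinearMap.id : M →ₗ[R] M) (LinearMap.id : N →ₗ[R] N),
    LinearMap.prodMap_id]

lemma d_pi_le (n : ℕ) :
    rk.r (LinearMap.id : (Fin n → R) →ₗ[R] (Fin n → R)) ≤ (n : ℝ≥0∞) := by
  induction n with
  | zero =>
    rw [r_subsingleton rk]
    simp
  | succ n ih =>
    have e : (Fin (n + 1) → R) ≃ₗ[R] ((Fin n → R) × (Fin 1 → R)) :=
      (LinearEquiv.funCongrLeft R R (finSumFinEquiv : Fin n ⊕ Fin 1 ≃ Fin (n + 1))).trans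
        (LinearEquiv.sumArrowLequivProdArrow (Fin n) (Fin 1) R R)
    have e1 : (Fin 1 → R) ≃ₗ[R] R := LinearEquiv.funUnique (Fin 1) R R
    rw [d_congr rk e, d_prod, d_congr rk e1, rk.r_id_ring]
    push_cast
    exact add_le_add ih le_rfl

lemma d_lt_top (M : Type u) [AddCommGroup M] [Module R M] [Module.Finite R M] :
    rk.r (LinearMap.id : M →ₗ[R] M) < ⊤ := by
  obtain ⟨n, f, hf⟩ := Module.Finite.exists_fin' R M
  rw [r_surj rk f hf]
  exact lt_of_le_of_lt ((r_le_id_left rk f).trans (d_pi_le rk n)) (ENNReal.natCast_lt_top n)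

end Basic

end ExtendedSylvesterMapRank
namespace ExtendedSylvesterMapRank

section Core

variable {R : Type u} [Ring R] (rk : ExtendedSylvesterMapRank R)

lemma core {M₁ M₂ M₃ M₄ : Type u} [AddCommGroup M₁] [Module R M₁] [AddCommGroup M₂] [Module R M₂]
    [AddCommGroup M₃] [Module R M₃] [AddCommGroup M₄] [Module R M₄]
    [Module.Finite R M₃] [Module.Finite R M₄]
    (α : M₁ →ₗ[R] M₃) (β : M₂ →ₗ[R] M₄) (γ : M₁ →ₗ[R] M₄) :
    rk.r α + rk.r β ≤
      rk.r ((α.comp (LinearMap.fst R M₁ M₂)).prod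
        ((γ.comp (LinearMap.fst R M₁ M₂)) + (β.comp (LinearMap.snd R M₁ M₂)))) := by
  set Φ : (M₁ × M₂) →ₗ[R] (M₃ × M₄) :=
    (α.comp (LinearMap.fst R M₁ M₂)).prod
      ((γ.comp (LinearMap.fst R M₁ M₂)) + (β.comp (LinearMap.snd R M₁ M₂))) with hΦdef
  have hΦ : ∀ x : M₁ × M₂, Φ x = (α x.1, γ x.1 + β x.2) := fun x => rfl
  let π : (M₃ × M₄) →ₗ[R] ((M₃ × M₄) ⧸ LinearMap.range Φ) := (LinearMap.range Φ).mkQ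
  let q₄ : M₄ →ₗ[R] ((M₃ × M₄) ⧸ LinearMap.range Φ) := π ∘ₗ LinearMap.inr R M₃ M₄
  have hq₄ : ∀ y : M₄, q₄ y = π (0, y) := fun y => rfl
  have hmem : ∀ y : M₂, ((0 : M₃), β y) ∈ LinearMap.range Φ := fun y =>
    ⟨(0, y), by rw [hΦ]; simp⟩
  have hkerq : LinearMap.range β ≤ LinearMap.ker q₄ := by
    rintro _ ⟨y, rfl⟩
    rw [LinearMap.mem_ker, hq₄, Submodule.mkQ_apply, Submodule.Quotient.mk_eq_zero]
    exact hmem y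
  let q' : (M₄ ⧸ LinearMap.range β) →ₗ[R] ((M₃ × M₄) ⧸ LinearMap.range Φ) :=
    Submodule.liftQ (LinearMap.range β) q₄ hkerq
  have hq4eq : q' ∘ₗ (LinearMap.range β).mkQ = q₄ := Submodule.liftQ_mkQ _ _ _
  have hq4le : rk.r q₄ ≤
      rk.r (LinearMap.id : (M₄ ⧸ LinearMap.range β) →ₗ[R] (M₄ ⧸ LinearMap.range β)) := by
    rw [← hq4eq]
    exact (r_comp_le_left rk _ _).trans (r_le_id_left rk _)
  -- the second quotient
  let s : M₃ →ₗ[R] (((M₃ × M₄) ⧸ LinearMap.range Φ) ⧸ LinearMap.range q₄) :=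
    (LinearMap.range q₄).mkQ ∘ₗ π ∘ₗ LinearMap.inl R M₃ M₄
  have hs : ∀ a : M₃, s a = (LinearMap.range q₄).mkQ (π (a, 0)) := fun a => rfl
  have hkers : LinearMap.range α ≤ LinearMap.ker s := by
    rintro _ ⟨x, rfl⟩
    rw [LinearMap.mem_ker, hs]
    have h1 : ((α x, (0 : M₄)) : M₃ × M₄) = Φ (x, 0) - (0, γ x) := by
      rw [hΦ]; simp
    have h2 : π (Φ (x, 0)) = 0 := by
      rw [Submodule.mkQ_apply, Submodule.Quotient.mk_eq_zero]
      exact ⟨(x, 0), rfl⟩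
    have h3 : π ((α x, (0 : M₄))) = -(q₄ (γ x)) := by
      rw [h1, map_sub, h2, zero_sub, hq₄]
    rw [h3, map_neg, neg_eq_zero, Submodule.mkQ_apply, Submodule.Quotient.mk_eq_zero]
    exact ⟨γ x, rfl⟩
  let s' : (M₃ ⧸ LinearMap.range α) →ₗ[R]
      (((M₃ × M₄) ⧸ LinearMap.range Φ) ⧸ LinearMap.range q₄) :=
    Submodule.liftQ (LinearMap.range α) s hkers
  have hs'surj : Function.Surjective s' := by
    intro dd
    obtain ⟨c, rfl⟩ := Submodule.mkQ_surjective _ dd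
    obtain ⟨⟨a, b⟩, rfl⟩ := Submodule.mkQ_surjective _ c
    refine ⟨Submodule.Quotient.mk a, ?_⟩
    have hsplit : ((a, b) : M₃ × M₄) = (a, 0) + (0, b) := by simp
    have hb : (LinearMap.range q₄).mkQ (π ((0 : M₃), b)) = 0 := by
      rw [Submodule.mkQ_apply, Submodule.Quotient.mk_eq_zero]
      exact ⟨b, rfl⟩
    calc s' (Submodule.Quotient.mk a) = s a := Submodule.liftQ_apply _ _ _
      _ = (LinearMap.range q₄).mkQ ((LinearMap.range Φ).mkQ ((a, b) : M₃ × M₄)) := by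
          rw [hs, hsplit, map_add, map_add, hb, add_zero]
  have hDle : rk.r (LinearMap.id :
        (((M₃ × M₄) ⧸ LinearMap.range Φ) ⧸ LinearMap.range q₄) →ₗ[R]
        (((M₃ × M₄) ⧸ LinearMap.range Φ) ⧸ LinearMap.range q₄)) ≤
      rk.r (LinearMap.id : (M₃ ⧸ LinearMap.range α) →ₗ[R] (M₃ ⧸ LinearMap.range α)) := by
    rw [r_surj rk s' hs'surj]
    exact r_le_id_left rk _
  have hC : rk.r (LinearMap.id : ((M₃ × M₄) ⧸ LinearMap.range Φ) →ₗ[R]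
        ((M₃ × M₄) ⧸ LinearMap.range Φ)) ≤
      rk.r (LinearMap.id : (M₄ ⧸ LinearMap.range β) →ₗ[R] (M₄ ⧸ LinearMap.range β)) +
      rk.r (LinearMap.id : (M₃ ⧸ LinearMap.range α) →ₗ[R] (M₃ ⧸ LinearMap.range α)) := by
    rw [rk.additivity q₄]
    exact add_le_add hq4le hDle
  have h34 := rk.additivity Φ
  have h3 := rk.additivity α
  have h4 := rk.additivity β
  have hprod := d_prod rk M₃ M₄
  have hCfin : rk.r (LinearMap.id : ((M₃ × M₄) ⧸ LinearMap.range Φ) →ₗ[R]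
      ((M₃ × M₄) ⧸ LinearMap.range Φ)) ≠ ⊤ := by
    have hsur : rk.r (LinearMap.id : ((M₃ × M₄) ⧸ LinearMap.range Φ) →ₗ[R]
        ((M₃ × M₄) ⧸ LinearMap.range Φ)) ≤
        rk.r (LinearMap.id : (M₃ × M₄) →ₗ[R] (M₃ × M₄)) := by
      rw [r_surj rk (LinearMap.range Φ).mkQ (Submodule.mkQ_surjective _)]
      exact r_le_id_left rk _
    refine ne_of_lt (lt_of_le_of_lt hsur ?_)
    rw [hprod]
    exact ENNReal.add_lt_top.mpr ⟨d_lt_top rk M₃, d_lt_top rk M₄⟩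
  have key : rk.r α + rk.r β + rk.r (LinearMap.id : ((M₃ × M₄) ⧸ LinearMap.range Φ) →ₗ[R]
      ((M₃ × M₄) ⧸ LinearMap.range Φ)) ≤ rk.r Φ + rk.r (LinearMap.id :
      ((M₃ × M₄) ⧸ LinearMap.range Φ) →ₗ[R] ((M₃ × M₄) ⧸ LinearMap.range Φ)) := by
    calc rk.r α + rk.r β + rk.r (LinearMap.id : ((M₃ × M₄) ⧸ LinearMap.range Φ) →ₗ[R]
          ((M₃ × M₄) ⧸ LinearMap.range Φ))
        ≤ rk.r α + rk.r β +
          (rk.r (LinearMap.id : (M₄ ⧸ LinearMap.range β) →ₗ[R] (M₄ ⧸ LinearMap.range β)) +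
           rk.r (LinearMap.id : (M₃ ⧸ LinearMap.range α) →ₗ[R] (M₃ ⧸ LinearMap.range α))) :=
          add_le_add_right hC _
      _ = (rk.r α +
            rk.r (LinearMap.id : (M₃ ⧸ LinearMap.range α) →ₗ[R] (M₃ ⧸ LinearMap.range α))) +
          (rk.r β +
            rk.r (LinearMap.id : (M₄ ⧸ LinearMap.range β) →ₗ[R] (M₄ ⧸ LinearMap.range β))) := by
          ring
      _ = rk.r (LinearMap.id : M₃ →ₗ[R] M₃) + rk.r (LinearMap.id : M₄ →ₗ[R] M₄) := by
          rw [← h3, ← h4]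
      _ = rk.r (LinearMap.id : (M₃ × M₄) →ₗ[R] (M₃ × M₄)) := hprod.symm
      _ = rk.r Φ + rk.r (LinearMap.id :
            ((M₃ × M₄) ⧸ LinearMap.range Φ) →ₗ[R] ((M₃ × M₄) ⧸ LinearMap.range Φ)) := h34
  exact (ENNReal.add_le_add_iff_right hCfin).mp key

end Core

end ExtendedSylvesterMapRank
namespace ExtendedSylvesterMapRank

section Limits

open Filter

variable {R : Type u} [Ring R] (rk : ExtendedSylvesterMapRank R)

/-- The rank of a map is the sup of the ranks of its restrictions to finitely generated
submodules of the domain. -/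
lemma r_eq_iSup_fg {M N : Type u} [AddCommGroup M] [Module R M] [AddCommGroup N] [Module R N]
    (h : M →ₗ[R] N) :
    rk.r h = ⨆ P : {P : Submodule R M // P.FG}, rk.r (h ∘ₗ P.1.subtype) := by
  classical
  set J := {P : Submodule R M // P.FG} with hJ
  letI : SemilatticeSup J := Subtype.semilatticeSup fun a b ha hb => ha.sup hb
  haveI : Nonempty J := ⟨⟨⊥, Submodule.fg_bot⟩⟩
  haveI : IsDirected J (· ≤ ·) := SemilatticeSup.instIsDirectedOrder
  let G : J → Type u := fun P => ↥P.1
  let f : ∀ i j : J, i ≤ j → G i →ₗ[R] G j := fun i j hij => Submodule.inclusion hij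
  haveI : DirectedSystem G (fun i j hij => f i j hij) :=
    ⟨fun _ _ => rfl, fun _ _ _ _ _ _ => rfl⟩
  let ψ : Module.DirectLimit G f →ₗ[R] M :=
    Module.DirectLimit.lift R J G f (fun P => P.1.subtype) (fun i j hij x => rfl)
  have hψof : ∀ (P : J) (x : G P), ψ (Module.DirectLimit.of R J G f P x) = P.1.subtype x :=
    fun P x => Module.DirectLimit.lift_of _ _ _
  have ψinj : Function.Injective ψ :=
    Module.DirectLimit.lift_injective _ _ fun P => P.1.injective_subtype
  have ψsurj : Function.Surjective ψ := fun x =>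
    ⟨Module.DirectLimit.of R J G f ⟨Submodule.span R {x}, Submodule.fg_span_singleton x⟩
        ⟨x, Submodule.mem_span_singleton_self x⟩, by rw [hψof]; rfl⟩
  let e := LinearEquiv.ofBijective ψ ⟨ψinj, ψsurj⟩
  have key := rk.continuity_from J G f N (fun P => h ∘ₗ P.1.subtype) (h ∘ₗ ψ)
    (fun i j hij => LinearMap.ext fun x => rfl)
    (fun P => LinearMap.ext fun x => by
      simp only [LinearMap.comp_apply]
      rw [hψof])
  have hr : rk.r (h ∘ₗ ψ) = rk.r h := by
    apply le_antisymm (r_comp_le_left rk _ _)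
    have heq : h = (h ∘ₗ ψ) ∘ₗ (e.symm : M →ₗ[R] Module.DirectLimit G f) := by
      ext x
      simp only [LinearMap.comp_apply]
      exact (congrArg h (e.apply_symm_apply x)).symm
    conv_lhs => rw [heq]
    exact r_comp_le_left rk _ _
  rw [hr] at key
  have hmono : Monotone fun P : J => rk.r (h ∘ₗ P.1.subtype) := by
    intro P Q hPQ
    show rk.r (h ∘ₗ P.1.subtype) ≤ rk.r (h ∘ₗ Q.1.subtype)
    have hcomp : (h ∘ₗ Q.1.subtype) ∘ₗ (Submodule.inclusion hPQ : ↥P.1 →ₗ[R] ↥Q.1) =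
        h ∘ₗ P.1.subtype := LinearMap.ext fun x => rfl
    have hle := r_comp_le_left rk (Submodule.inclusion hPQ : ↥P.1 →ₗ[R] ↥Q.1)
      (h ∘ₗ Q.1.subtype)
    rwa [hcomp] at hle
  exact tendsto_nhds_unique key (tendsto_atTop_iSup hmono)

end Limits

end ExtendedSylvesterMapRank
namespace ExtendedSylvesterMapRank

section LemB

open Filter

variable {R : Type u} [Ring R] (rk : ExtendedSylvesterMapRank R)

lemma le_of_fg_domain {M₁ M₂ M₃ M₄ : Type u}
    [AddCommGroup M₁] [Module R M₁] [AddCommGroup M₂] [Module R M₂]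
    [AddCommGroup M₃] [Module R M₃] [AddCommGroup M₄] [Module R M₄]
    [Module.Finite R M₁] [Module.Finite R M₂]
    (α : M₁ →ₗ[R] M₃) (β : M₂ →ₗ[R] M₄) (γ : M₁ →ₗ[R] M₄) :
    rk.r α + rk.r β ≤
      rk.r ((α.comp (LinearMap.fst R M₁ M₂)).prod
        ((γ.comp (LinearMap.fst R M₁ M₂)) + (β.comp (LinearMap.snd R M₁ M₂)))) := by
  classical
  set Φ : (M₁ × M₂) →ₗ[R] (M₃ × M₄) :=
    (α.comp (LinearMap.fst R M₁ M₂)).prod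
      ((γ.comp (LinearMap.fst R M₁ M₂)) + (β.comp (LinearMap.snd R M₁ M₂))) with hΦdef
  have hfgα : (LinearMap.range α).FG := by
    rw [LinearMap.range_eq_map]
    exact (Module.finite_def.mp inferInstance).map α
  have hfgβ : (LinearMap.range β).FG := by
    rw [LinearMap.range_eq_map]
    exact (Module.finite_def.mp inferInstance).map β
  have hfgγ : (LinearMap.range γ).FG := by
    rw [LinearMap.range_eq_map]
    exact (Module.finite_def.mp inferInstance).map γ
  set J₃ := {N : Submodule R M₃ // N.FG ∧ LinearMap.range α ≤ N} with hJ₃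
  set J₄ := {N : Submodule R M₄ // N.FG ∧ LinearMap.range γ ⊔ LinearMap.range β ≤ N} with hJ₄
  letI : SemilatticeSup J₃ := Subtype.semilatticeSup fun a b ha hb =>
    ⟨ha.1.sup hb.1, le_trans ha.2 le_sup_left⟩
  letI : SemilatticeSup J₄ := Subtype.semilatticeSup fun a b ha hb =>
    ⟨ha.1.sup hb.1, le_trans ha.2 le_sup_left⟩
  haveI : Nonempty J₃ := ⟨⟨LinearMap.range α, hfgα, le_rfl⟩⟩
  haveI : Nonempty J₄ := ⟨⟨LinearMap.range γ ⊔ LinearMap.range β, hfgγ.sup hfgβ, le_rfl⟩⟩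
  set J := J₃ × J₄ with hJ
  haveI : IsDirected J (· ≤ ·) := SemilatticeSup.instIsDirectedOrder
  let G : J → Type u := fun j => ↥j.1.1 × ↥j.2.1
  let f : ∀ i j : J, i ≤ j → G i →ₗ[R] G j := fun i j hij =>
    (Submodule.inclusion (hij.1 : i.1.1 ≤ j.1.1)).prodMap
      (Submodule.inclusion (hij.2 : i.2.1 ≤ j.2.1))
  haveI : DirectedSystem G (fun i j hij => f i j hij) :=
    ⟨fun _ _ => rfl, fun _ _ _ _ _ _ => rfl⟩
  let A : ∀ j : J, M₁ →ₗ[R] ↥j.1.1 := fun j =>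
    α.codRestrict j.1.1 fun x => j.1.2.2 ⟨x, rfl⟩
  let Bm : ∀ j : J, M₂ →ₗ[R] ↥j.2.1 := fun j =>
    β.codRestrict j.2.1 fun x => j.2.2.2 (le_sup_right (a := LinearMap.range γ) ⟨x, rfl⟩)
  let Gm : ∀ j : J, M₁ →ₗ[R] ↥j.2.1 := fun j =>
    γ.codRestrict j.2.1 fun x => j.2.2.2 (le_sup_left (b := LinearMap.range β) ⟨x, rfl⟩)
  let αj : ∀ j : J, (M₁ × M₂) →ₗ[R] G j := fun j =>
    ((A j).comp (LinearMap.fst R M₁ M₂)).prod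
      (((Gm j).comp (LinearMap.fst R M₁ M₂)) + ((Bm j).comp (LinearMap.snd R M₁ M₂)))
  have compat : ∀ (i j : J) (hij : i ≤ j), (f i j hij).comp (αj i) = αj j :=
    fun i j hij => LinearMap.ext fun x => rfl
  obtain ⟨j₀⟩ : Nonempty J := inferInstance
  let αlim : (M₁ × M₂) →ₗ[R] Module.DirectLimit G f :=
    (Module.DirectLimit.of R J G f j₀) ∘ₗ (αj j₀)
  have step : ∀ (i j : J) (hij : i ≤ j),
      (Module.DirectLimit.of R J G f j) ∘ₗ (αj j) =
      (Module.DirectLimit.of R J G f i) ∘ₗ (αj i) := by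
    intro i j hij
    rw [← compat i j hij]
    exact LinearMap.ext fun x => Module.DirectLimit.of_f (hij := hij) (x := (αj i) x)
  have hconst : ∀ j : J, (Module.DirectLimit.of R J G f j).comp (αj j) = αlim := by
    intro j
    calc (Module.DirectLimit.of R J G f j) ∘ₗ (αj j)
        = (Module.DirectLimit.of R J G f (j ⊔ j₀)) ∘ₗ (αj (j ⊔ j₀)) :=
          (step j (j ⊔ j₀) le_sup_left).symm
      _ = (Module.DirectLimit.of R J G f j₀) ∘ₗ (αj j₀) := step j₀ (j ⊔ j₀) le_sup_right
  have key := rk.continuity_to J G f (M₁ × M₂) inferInstance αj αlim compat hconst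
  have hterm : ∀ j : J, rk.r α + rk.r β ≤ rk.r (αj j) := by
    intro j
    haveI : Module.Finite R ↥j.1.1 := Module.Finite.iff_fg.mpr j.1.2.1
    haveI : Module.Finite R ↥j.2.1 := Module.Finite.iff_fg.mpr j.2.2.1
    have h1 : rk.r α ≤ rk.r (A j) := by
      have hA : j.1.1.subtype ∘ₗ A j = α := LinearMap.subtype_comp_codRestrict _ _ _
      have hle := r_comp_le_right rk (A j) j.1.1.subtype
      rwa [hA] at hle
    have h2 : rk.r β ≤ rk.r (Bm j) := by
      have hB : j.2.1.subtype ∘ₗ Bm j = β := LinearMap.subtype_comp_codRestrict _ _ _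
      have hle := r_comp_le_right rk (Bm j) j.2.1.subtype
      rwa [hB] at hle
    have h3 : rk.r (A j) + rk.r (Bm j) ≤ rk.r (αj j) := core rk (A j) (Bm j) (Gm j)
    exact le_trans (add_le_add h1 h2) h3
  have hlim : rk.r α + rk.r β ≤ rk.r αlim :=
    ge_of_tendsto key (Filter.Eventually.of_forall hterm)
  -- identify rk.r αlim with rk.r Φ
  let ψ : Module.DirectLimit G f →ₗ[R] (M₃ × M₄) :=
    Module.DirectLimit.lift R J G f
      (fun j => (j.1.1.subtype).prodMap (j.2.1.subtype)) (fun i j hij x => rfl)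
  have hψof : ∀ (j : J) (x : G j),
      ψ (Module.DirectLimit.of R J G f j x) = ((j.1.1.subtype).prodMap (j.2.1.subtype)) x :=
    fun j x => Module.DirectLimit.lift_of _ _ _
  have ψinj : Function.Injective ψ :=
    Module.DirectLimit.lift_injective _ _ fun j => by
      rw [LinearMap.coe_prodMap]
      exact Function.Injective.prodMap j.1.1.injective_subtype j.2.1.injective_subtype
  have ψsurj : Function.Surjective ψ := by
    rintro ⟨x, y⟩
    refine ⟨Module.DirectLimit.of R J G f
      ⟨⟨j₀.1.1 ⊔ Submodule.span R {x},
        ⟨j₀.1.2.1.sup (Submodule.fg_span_singleton x), le_trans j₀.1.2.2 le_sup_left⟩⟩,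
       ⟨j₀.2.1 ⊔ Submodule.span R {y},
        ⟨j₀.2.2.1.sup (Submodule.fg_span_singleton y), le_trans j₀.2.2.2 le_sup_left⟩⟩⟩
      (⟨x, le_sup_right (a := j₀.1.1) (Submodule.mem_span_singleton_self x)⟩,
       ⟨y, le_sup_right (a := j₀.2.1) (Submodule.mem_span_singleton_self y)⟩), ?_⟩
    rw [hψof]
    rfl
  let e := LinearEquiv.ofBijective ψ ⟨ψinj, ψsurj⟩
  have hψα : ψ ∘ₗ αlim = Φ := LinearMap.ext fun x => by
    show ψ (Module.DirectLimit.of R J G f j₀ (αj j₀ x)) = Φ x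
    rw [hψof]
    rfl
  have hfact : αlim = (e.symm : (M₃ × M₄) →ₗ[R] Module.DirectLimit G f) ∘ₗ Φ := by
    refine LinearMap.ext fun x => ?_
    simp only [LinearMap.comp_apply]
    rw [← hψα]
    simp only [LinearMap.comp_apply]
    exact (e.symm_apply_apply (αlim x)).symm
  have hle2 : rk.r αlim ≤ rk.r Φ := by
    rw [hfact]
    exact r_comp_le_right rk _ _
  exact hlim.trans hle2

end LemB

end ExtendedSylvesterMapRank
/-- For an extended Sylvester map rank function `rk` for `R` and
`R`-module maps `α : M₁ → M₃`, `β : M₂ → M₄`, `γ : M₁ → M₄`, the block upper-triangular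
map `[[α, γ], [0, β]] : M₁ ⊕ M₂ → M₃ ⊕ M₄`, `(x, y) ↦ (α x, γ x + β y)`, satisfies
`rk([[α, γ], [0, β]]) ≥ rk(α) + rk(β)`. -/
theorem extendedSylvesterMapRank_blockTriangular (R : Type u) [Ring R]
    (rk : ExtendedSylvesterMapRank R)
    (M₁ M₂ M₃ M₄ : Type u) [AddCommGroup M₁] [Module R M₁] [AddCommGroup M₂] [Module R M₂]
    [AddCommGroup M₃] [Module R M₃] [AddCommGroup M₄] [Module R M₄]
    (α : M₁ →ₗ[R] M₃) (β : M₂ →ₗ[R] M₄) (γ : M₁ →ₗ[R] M₄) :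
    rk.r α + rk.r β ≤
      rk.r ((α.comp (LinearMap.fst R M₁ M₂)).prod
        ((γ.comp (LinearMap.fst R M₁ M₂)) + (β.comp (LinearMap.snd R M₁ M₂)))) := by
  classical
  haveI : Nonempty {P : Submodule R M₁ // P.FG} := ⟨⟨⊥, Submodule.fg_bot⟩⟩
  haveI : Nonempty {P : Submodule R M₂ // P.FG} := ⟨⟨⊥, Submodule.fg_bot⟩⟩
  rw [ExtendedSylvesterMapRank.r_eq_iSup_fg rk α, ExtendedSylvesterMapRank.r_eq_iSup_fg rk β,
    ENNReal.iSup_add]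
  refine iSup_le fun P => ?_
  rw [ENNReal.add_iSup]
  refine iSup_le fun Q => ?_
  haveI : Module.Finite R ↥P.1 := Module.Finite.iff_fg.mpr P.2
  haveI : Module.Finite R ↥Q.1 := Module.Finite.iff_fg.mpr Q.2
  have hb := ExtendedSylvesterMapRank.le_of_fg_domain rk
    (α ∘ₗ P.1.subtype) (β ∘ₗ Q.1.subtype) (γ ∘ₗ P.1.subtype)
  have hcomp : (((α ∘ₗ P.1.subtype).comp (LinearMap.fst R ↥P.1 ↥Q.1)).prod
      (((γ ∘ₗ P.1.subtype).comp (LinearMap.fst R ↥P.1 ↥Q.1)) +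
       ((β ∘ₗ Q.1.subtype).comp (LinearMap.snd R ↥P.1 ↥Q.1)))) =
      ((α.comp (LinearMap.fst R M₁ M₂)).prod
        ((γ.comp (LinearMap.fst R M₁ M₂)) + (β.comp (LinearMap.snd R M₁ M₂)))) ∘ₗ
        ((P.1.subtype).prodMap (Q.1.subtype)) := LinearMap.ext fun x => rfl
  rw [hcomp] at hb
  exact hb.trans (ExtendedSylvesterMapRank.r_comp_le_left rk _ _)
end

section
/- Let rk be an extended Sylvester map rank function for a unital ring R arising from a bivariant Sylvester module rank function dim via rk(α) := dim(im(α)|cod(α)). Then for any maps α : M₁ → M₂ and β : M₂ → M₃ of R-modules, rk(β) = rk(αβ) + rk(β/α), where β/α : coker(α) → coker(αβ) is the induced map. -/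
universe u
open scoped NNReal ENNReal

namespace BivSylAux

open Submodule LinearMap Function

variable {R : Type u} [Ring R] (dim : BivariantSylvesterRank R)
variable {M N : Type u} [AddCommGroup M] [Module R M] [AddCommGroup N] [Module R N]

/-- bookkeeping: comap of subtype commutes with sup for submodules below `Y`. -/
lemma comap_subtype_sup {Y s t : Submodule R M} (hs : s ≤ Y) (ht : t ≤ Y) :
    (s ⊔ t).comap Y.subtype = s.comap Y.subtype ⊔ t.comap Y.subtype := by
  apply le_antisymm
  · rintro ⟨x, hxY⟩ hx
    obtain ⟨a, ha, b, hb, rfl⟩ := Submodule.mem_sup.mp hx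
    exact Submodule.mem_sup.mpr ⟨⟨a, hs ha⟩, ha, ⟨b, ht hb⟩, hb, rfl⟩
  · exact sup_le (Submodule.comap_mono le_sup_left) (Submodule.comap_mono le_sup_right)

/-- bookkeeping: compatibility of `comap subtype` with inclusions. -/
lemma comap_inclusion {Z Y s : Submodule R M} (hZY : Z ≤ Y) (hsZ : s ≤ Z) :
    (s.comap Z.subtype).map (Submodule.inclusion hZY) = s.comap Y.subtype := by
  ext x
  constructor
  · rintro ⟨y, hy, rfl⟩
    simpa using hy
  · intro hx
    exact ⟨⟨x.1, hsZ hx⟩, hx, Subtype.ext rfl⟩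

lemma fg_comap_subtype {s Z : Submodule R M} (hs : s.FG) (hsZ : s ≤ Z) :
    (s.comap Z.subtype).FG := by
  apply Submodule.fg_of_fg_map_injective Z.subtype (Submodule.injective_subtype Z)
  rwa [Submodule.map_comap_subtype, inf_eq_right.mpr hsZ]

lemma map_self_mkQ (p : Submodule R M) : p.map p.mkQ = ⊥ := by
  rw [eq_bot_iff]
  rintro x ⟨y, hy, rfl⟩
  simpa [Submodule.mkQ_apply, Submodule.Quotient.mk_eq_zero] using hy

/-- lifting a f.g. submodule of a quotient to a f.g. submodule below `q`. -/
lemma exists_fg_lift {p q : Submodule R M} {Z : Submodule R (M ⧸ p)} (hZ : Z.FG)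
    (hZq : Z ≤ q.map p.mkQ) :
    ∃ L : Submodule R M, L.FG ∧ L ≤ q ∧ L.map p.mkQ = Z := by
  obtain ⟨S, hS⟩ := hZ
  have hmem : ∀ z : {z : M ⧸ p // z ∈ (S : Set (M ⧸ p))}, ∃ y, y ∈ q ∧ p.mkQ y = z.1 := by
    intro z
    have hz : z.1 ∈ q.map p.mkQ := hZq (hS ▸ Submodule.subset_span z.2)
    simpa [Submodule.mem_map] using hz
  choose F hF1 hF2 using hmem
  refine ⟨Submodule.span R (Set.range F), Submodule.fg_span (Set.finite_range F), ?_, ?_⟩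
  · rw [Submodule.span_le]
    rintro _ ⟨z, rfl⟩
    exact hF1 z
  · rw [Submodule.map_span]
    have himg : p.mkQ '' Set.range F = (S : Set (M ⧸ p)) := by
      ext u
      constructor
      · rintro ⟨_, ⟨z, rfl⟩, rfl⟩
        rw [hF2 z]
        exact z.2
      · intro hu
        exact ⟨F ⟨u, hu⟩, ⟨_, rfl⟩, hF2 _⟩
    rw [himg, hS]

lemma d_iso_top (e : M ≃ₗ[R] N) : dim.d M ⊤ = dim.d N ⊤ := by
  rw [dim.iso_invariant M N e ⊤, Submodule.map_top, LinearEquiv.range]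

lemma d_mono {p q : Submodule R M} (h : p ≤ q) : dim.d M p ≤ dim.d M q := by
  rw [dim.continuity_sup M p, dim.continuity_sup M q]
  exact iSup_le fun i => le_iSup_of_le ⟨i.1, i.2.1, i.2.2.trans h⟩ le_rfl

lemma d_le_ambient {s Z : Submodule R M} (hs : s.FG) (hZ : Z.FG) (hsZ : s ≤ Z) :
    dim.d M s ≤ dim.d Z (s.comap Z.subtype) := by
  rw [dim.continuity_inf M s hs]
  exact iInf_le (fun q : {q : Submodule R M // q.FG ∧ s ≤ q} =>
    dim.d q.1 (s.comap q.1.subtype)) ⟨Z, hZ, hsZ⟩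

lemma d_pi_le (n : ℕ) : dim.d (Fin n → R) ⊤ ≤ (n : ℝ≥0∞) := by
  induction n with
  | zero =>
    have e : (Fin 0 → R) ≃ₗ[R] PUnit.{u+1} :=
      { toFun := fun _ => PUnit.unit
        map_add' := fun _ _ => rfl
        map_smul' := fun _ _ => rfl
        invFun := fun _ => 0
        left_inv := fun x => Subsingleton.elim _ _
        right_inv := fun x => rfl }
    rw [d_iso_top dim e, dim.d_zero]
    simp
  | succ n ih =>
    have e : (Fin (n + 1) → R) ≃ₗ[R] R × (Fin n → R) :=
      { toFun := fun f => (f 0, fun i => f i.succ)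
        map_add' := fun _ _ => rfl
        map_smul' := fun _ _ => rfl
        invFun := fun x => Fin.cons x.1 x.2
        left_inv := fun f => Fin.cons_self_tail f
        right_inv := fun x => by simp }
    rw [d_iso_top dim e, ← Submodule.prod_top, dim.d_prod, dim.d_ring]
    calc 1 + dim.d (Fin n → R) ⊤ ≤ 1 + (n : ℝ≥0∞) := by exact add_le_add_right ih 1
      _ = ((n + 1 : ℕ) : ℝ≥0∞) := by push_cast; ring

lemma d_top_ne_top [Module.Finite R M] : dim.d M ⊤ ≠ ∞ := by
  obtain ⟨n, f, hf⟩ := Module.Finite.exists_fin' R M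
  have h1 : dim.d M ⊤ = dim.d ((Fin n → R) ⧸ LinearMap.ker f) ⊤ :=
    (d_iso_top dim (f.quotKerEquivOfSurjective hf)).symm
  have h2 : dim.d ((Fin n → R) ⧸ LinearMap.ker f) ⊤ ≤ dim.d (Fin n → R) ⊤ := by
    rw [dim.additivity (Fin n → R) (LinearMap.ker f)]
    exact le_add_self
  rw [h1]
  exact ne_top_of_le_ne_top (ENNReal.natCast_ne_top n) (h2.trans (d_pi_le dim n))

lemma d_fg_ne_top {s : Submodule R M} (hs : s.FG) : dim.d M s ≠ ∞ := by
  have h := d_le_ambient dim hs hs le_rfl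
  rw [Submodule.comap_subtype_self] at h
  haveI : Module.Finite R s := Module.Finite.iff_fg.mpr hs
  exact ne_top_of_le_ne_top (d_top_ne_top dim) h

/-- full additivity in a finitely generated ambient module. -/
lemma d_add_fin [Module.Finite R M] {p q : Submodule R M} (h : p ≤ q) :
    dim.d M q = dim.d M p + dim.d (M ⧸ p) (q.map p.mkQ) := by
  haveI : Module.Finite R (M ⧸ q) := Module.Finite.of_surjective q.mkQ q.mkQ_surjective
  have A := dim.additivity M q
  have B := dim.additivity M p
  have Cq := dim.additivity (M ⧸ p) (q.map p.mkQ)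
  have I : dim.d ((M ⧸ p) ⧸ (q.map p.mkQ)) ⊤ = dim.d (M ⧸ q) ⊤ :=
    d_iso_top dim (Submodule.quotientQuotientEquivQuotient p q h)
  have key : dim.d (M ⧸ q) ⊤ + dim.d M q
      = dim.d (M ⧸ q) ⊤ + (dim.d M p + dim.d (M ⧸ p) (q.map p.mkQ)) := by
    rw [add_comm _ (dim.d M q), ← A, B, Cq, I]
    ring
  exact (ENNReal.add_right_inj (d_top_ne_top dim)).mp key

lemma d_range_le {T P : Type u} [AddCommGroup T] [Module R T] [AddCommGroup P] [Module R P]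
    [Module.Finite R T] (g : T →ₗ[R] P) : dim.d P (LinearMap.range g) ≤ dim.d T ⊤ := by
  have hrfg : (LinearMap.range g).FG := by
    rw [← Submodule.map_top]
    exact (Module.finite_def.mp ‹Module.Finite R T›).map g
  have h1 := d_le_ambient dim hrfg hrfg le_rfl
  rw [Submodule.comap_subtype_self] at h1
  have h2 : dim.d ↥(LinearMap.range g) ⊤ = dim.d (T ⧸ LinearMap.ker g) ⊤ :=
    (d_iso_top dim g.quotKerEquivRange).symm
  have h3 : dim.d (T ⧸ LinearMap.ker g) ⊤ ≤ dim.d T ⊤ := by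
    rw [dim.additivity T (LinearMap.ker g)]
    exact le_add_self
  exact h1.trans (le_of_eq h2 |>.trans h3)


/-- quotient monotonicity in a finitely generated ambient module:
the image of `B` in `T ⧸ A` has dimension at most that of `B`. -/
lemma d_map_mkQ_le {T : Type u} [AddCommGroup T] [Module R T] [Module.Finite R T]
    (A B : Submodule R T) :
    dim.d (T ⧸ A) (B.map A.mkQ) ≤ dim.d T B := by
  classical
  set g : T →ₗ[R] (T ⧸ A) × (T ⧸ B) := A.mkQ.prod B.mkQ with hgdef
  have hA : A ≤ (A ⊔ B).comap (LinearMap.id : T →ₗ[R] T) := by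
    simpa using (le_sup_left : A ≤ A ⊔ B)
  have hB : B ≤ (A ⊔ B).comap (LinearMap.id : T →ₗ[R] T) := by
    simpa using (le_sup_right : B ≤ A ⊔ B)
  set φA : (T ⧸ A) →ₗ[R] T ⧸ (A ⊔ B) := Submodule.mapQ A (A ⊔ B) LinearMap.id hA with hφA
  set φB : (T ⧸ B) →ₗ[R] T ⧸ (A ⊔ B) := Submodule.mapQ B (A ⊔ B) LinearMap.id hB with hφB
  set h : (T ⧸ A) × (T ⧸ B) →ₗ[R] T ⧸ (A ⊔ B) :=
    φA.comp (LinearMap.fst R (T ⧸ A) (T ⧸ B)) - φB.comp (LinearMap.snd R (T ⧸ A) (T ⧸ B))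
    with hhdef
  have hsurj : Surjective h := by
    intro z
    obtain ⟨t, rfl⟩ := (A ⊔ B).mkQ_surjective z
    refine ⟨(A.mkQ t, 0), ?_⟩
    simp [hhdef, hφA, hφB, Submodule.mapQ_apply, Submodule.mkQ_apply]
  have hker : LinearMap.ker h = LinearMap.range g := by
    apply le_antisymm
    · rintro ⟨u, v⟩ hx
      obtain ⟨y₁, rfl⟩ := A.mkQ_surjective u
      obtain ⟨y₂, rfl⟩ := B.mkQ_surjective v
      have h0 : Submodule.Quotient.mk (p := A ⊔ B) (y₁ - y₂) = 0 := by
        have hx' : h (A.mkQ y₁, B.mkQ y₂) = 0 := hx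
        simpa [hhdef, hφA, hφB, Submodule.mapQ_apply, Submodule.mkQ_apply, sub_eq_zero,
          ← Submodule.Quotient.mk_sub, sub_eq_zero] using hx'
      have hmem : y₁ - y₂ ∈ A ⊔ B := (Submodule.Quotient.mk_eq_zero _).mp h0
      obtain ⟨a, ha, b, hb, hab⟩ := Submodule.mem_sup.mp hmem
      refine ⟨y₁ - a, ?_⟩
      have h1 : A.mkQ (y₁ - a) = A.mkQ y₁ := by
        rw [map_sub]
        have : A.mkQ a = 0 := by
          simpa [Submodule.mkQ_apply] using (Submodule.Quotient.mk_eq_zero A).mpr ha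
        rw [this, sub_zero]
      have h2 : B.mkQ (y₁ - a) = B.mkQ y₂ := by
        have hy : y₁ - a = y₂ + b := by
          have h' : y₁ - a - (y₂ + b) = -((a + b) - (y₁ - y₂)) := by abel
          rw [hab, sub_self, neg_zero] at h'
          exact sub_eq_zero.mp h'
        rw [hy, map_add]
        have : B.mkQ b = 0 := by
          simpa [Submodule.mkQ_apply] using (Submodule.Quotient.mk_eq_zero B).mpr hb
        rw [this, add_zero]
      show g (y₁ - a) = (A.mkQ y₁, B.mkQ y₂)
      rw [hgdef]
      exact Prod.ext h1 h2
    · rintro _ ⟨t, rfl⟩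
      simp [hhdef, hgdef, hφA, hφB, LinearMap.mem_ker, Submodule.mapQ_apply,
        Submodule.mkQ_apply]
  haveI : Module.Finite R (T ⧸ A) := Module.Finite.of_surjective A.mkQ A.mkQ_surjective
  haveI : Module.Finite R (T ⧸ B) := Module.Finite.of_surjective B.mkQ B.mkQ_surjective
  haveI : Module.Finite R (T ⧸ (A ⊔ B)) :=
    Module.Finite.of_surjective (A ⊔ B).mkQ (A ⊔ B).mkQ_surjective
  have e2 : dim.d (((T ⧸ A) × (T ⧸ B)) ⧸ LinearMap.range g) ⊤ = dim.d (T ⧸ (A ⊔ B)) ⊤ :=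
    d_iso_top dim ((Submodule.quotEquivOfEq _ _ hker.symm).trans
      (h.quotKerEquivOfSurjective hsurj))
  have hP : dim.d ((T ⧸ A) × (T ⧸ B)) ⊤ = dim.d (T ⧸ A) ⊤ + dim.d (T ⧸ B) ⊤ := by
    rw [← Submodule.prod_top]
    exact dim.d_prod _ _ ⊤ ⊤
  have hadd1 := dim.additivity ((T ⧸ A) × (T ⧸ B)) (LinearMap.range g)
  have e3 : dim.d ((T ⧸ A) ⧸ (B.map A.mkQ)) ⊤ = dim.d (T ⧸ (A ⊔ B)) ⊤ :=
    d_iso_top dim (Submodule.quotientQuotientEquivQuotientSup A B)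
  have hTA : dim.d (T ⧸ A) ⊤ = dim.d (T ⧸ A) (B.map A.mkQ) + dim.d (T ⧸ (A ⊔ B)) ⊤ := by
    rw [dim.additivity (T ⧸ A) (B.map A.mkQ), e3]
  have hTB := dim.additivity T B
  have hq := d_range_le dim g
  -- assemble
  set x := dim.d (T ⧸ A) (B.map A.mkQ)
  set y := dim.d T B
  set c1 := dim.d (T ⧸ (A ⊔ B)) ⊤
  set c2 := dim.d (T ⧸ B) ⊤
  have hc1 : c1 ≠ ∞ := d_top_ne_top dim
  have hc2 : c2 ≠ ∞ := d_top_ne_top dim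
  have main : (c1 + c2) + x ≤ (c1 + c2) + y := by
    calc (c1 + c2) + x = (x + c1) + c2 := by ring
      _ = dim.d (T ⧸ A) ⊤ + c2 := by rw [← hTA]
      _ = dim.d ((T ⧸ A) × (T ⧸ B)) ⊤ := by rw [hP]
      _ = dim.d ((T ⧸ A) × (T ⧸ B)) (LinearMap.range g) + c1 := by rw [hadd1, e2]
      _ ≤ dim.d T ⊤ + c1 := add_le_add_left hq c1
      _ = (y + c2) + c1 := by rw [hTB]
      _ = (c1 + c2) + y := by ring
  have hc : c1 + c2 ≠ ∞ := ENNReal.add_ne_top.mpr ⟨hc1, hc2⟩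
  exact (ENNReal.add_le_add_iff_left hc).mp main

/-- going to a further quotient decreases relative dimension (f.g. ambient). -/
lemma d_quot_step {T : Type u} [AddCommGroup T] [Module R T] [Module.Finite R T]
    {C₀ C : Submodule R T} (h0 : C₀ ≤ C) (s : Submodule R T) :
    dim.d (T ⧸ C) (s.map C.mkQ) ≤ dim.d (T ⧸ C₀) (s.map C₀.mkQ) := by
  haveI : Module.Finite R (T ⧸ C₀) := Module.Finite.of_surjective C₀.mkQ C₀.mkQ_surjective
  have hq := d_map_mkQ_le dim (C.map C₀.mkQ) (s.map C₀.mkQ)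
  set e := Submodule.quotientQuotientEquivQuotient C₀ C h0 with hedef
  have hcomp : ((e : ((T ⧸ C₀) ⧸ (C.map C₀.mkQ)) →ₗ[R] T ⧸ C).comp
      (C.map C₀.mkQ).mkQ).comp C₀.mkQ = C.mkQ := by
    ext t
    simp [hedef, Submodule.quotientQuotientEquivQuotient, Submodule.mkQ_apply,
      Submodule.quotientQuotientEquivQuotientAux_mk_mk]
  have claim : ((s.map C₀.mkQ).map (C.map C₀.mkQ).mkQ).map
      (e : ((T ⧸ C₀) ⧸ (C.map C₀.mkQ)) →ₗ[R] T ⧸ C) = s.map C.mkQ := by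
    rw [← Submodule.map_comp, ← Submodule.map_comp, hcomp]
  calc dim.d (T ⧸ C) (s.map C.mkQ)
      = dim.d ((T ⧸ C₀) ⧸ (C.map C₀.mkQ)) ((s.map C₀.mkQ).map (C.map C₀.mkQ).mkQ) := by
        rw [dim.iso_invariant _ _ e, claim]
    _ ≤ dim.d (T ⧸ C₀) (s.map C₀.mkQ) := hq


/-- key bookkeeping isomorphism: for `w ≤ Y`, the relative dimension of the image of `w`
in `Y ⧸ (p ∩ Y)` equals the relative dimension of `w`'s image inside the image of `Y`
in `M ⧸ p`. -/
lemma d_key {Y w : Submodule R M} {C : Submodule R ↥Y} (p : Submodule R M) (hC : C = p.comap Y.subtype)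
    {Z : Submodule R (M ⧸ p)} (hZ : Y.map p.mkQ = Z) (hw : w ≤ Y) :
    dim.d (↥Y ⧸ C) ((w.comap Y.subtype).map C.mkQ)
      = dim.d ↥Z ((w.map p.mkQ).comap Z.subtype) := by
  subst hC hZ
  set g : ↥Y →ₗ[R] M ⧸ p := p.mkQ.comp Y.subtype with hg
  have hker : p.comap Y.subtype = LinearMap.ker g := by
    rw [hg, LinearMap.ker_comp, Submodule.ker_mkQ]
  have hrange : LinearMap.range g = Y.map p.mkQ := by
    rw [hg, LinearMap.range_comp, Submodule.range_subtype]
  set e : (↥Y ⧸ p.comap Y.subtype) ≃ₗ[R] ↥(Y.map p.mkQ) :=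
    (Submodule.quotEquivOfEq _ _ hker).trans
      (g.quotKerEquivRange.trans (LinearEquiv.ofEq _ _ hrange)) with hedef
  rw [dim.iso_invariant _ _ e]
  congr 1
  ext x
  constructor
  · rintro ⟨u, hu, rfl⟩
    obtain ⟨y, hy, rfl⟩ := hu
    have : ((e ((p.comap Y.subtype).mkQ y) : ↥(Y.map p.mkQ)) : M ⧸ p) = p.mkQ y.1 := by
      simp [hedef, Submodule.mkQ_apply, Submodule.quotEquivOfEq_mk,
        LinearMap.quotKerEquivRange_apply_mk, hg]
    simpa [Submodule.mem_comap, this] using ⟨y.1, hy, rfl⟩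
  · intro hx
    obtain ⟨m, hm, hmx⟩ := hx
    refine ⟨(p.comap Y.subtype).mkQ ⟨m, hw hm⟩, ⟨⟨m, hw hm⟩, hm, rfl⟩, ?_⟩
    apply Subtype.ext
    simp [hedef, Submodule.mkQ_apply, Submodule.quotEquivOfEq_mk,
      LinearMap.quotKerEquivRange_apply_mk, hg, hmx]

/-- pushing a f.g. submodule along an injective map into a possibly larger ambient module
decreases dimension. -/
lemma d_map_le {P : Type u} [AddCommGroup P] [Module R P] (j : N →ₗ[R] P)
    (hj : Function.Injective j) [Module.Finite R N] {s : Submodule R N} (hs : s.FG) :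
    dim.d P (s.map j) ≤ dim.d N s := by
  have hrfg : (LinearMap.range j).FG := by
    rw [← Submodule.map_top]
    exact (Module.finite_def.mp ‹Module.Finite R N›).map j
  have hsr : s.map j ≤ LinearMap.range j := by
    rw [← Submodule.map_top]
    exact Submodule.map_mono le_top
  have h1 := d_le_ambient dim (hs.map j) hrfg hsr
  set e := LinearEquiv.ofInjective j hj with hedef
  have h3 : s.map (e : N →ₗ[R] ↥(LinearMap.range j))
      = (s.map j).comap (LinearMap.range j).subtype := by
    ext x
    constructor
    · rintro ⟨y, hy, rfl⟩
      simpa [hedef, Submodule.mem_comap] using ⟨y, hy, rfl⟩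
    · intro hx
      obtain ⟨y, hy, hyx⟩ := hx
      refine ⟨y, hy, Subtype.ext ?_⟩
      simpa [hedef] using hyx
  have h2 : dim.d N s = dim.d ↥(LinearMap.range j) ((s.map j).comap
      (LinearMap.range j).subtype) := by
    rw [dim.iso_invariant _ _ e s, h3]
  rw [h2]
  exact h1

/-- ε-approximation from below by a finitely generated submodule. -/
lemma exists_fg_le_d_le {p : Submodule R M} (hfin : dim.d M p ≠ ∞) {ε : ℝ≥0∞} (hε : ε ≠ 0) :
    ∃ p' : Submodule R M, p'.FG ∧ p' ≤ p ∧ dim.d M p ≤ dim.d M p' + ε := by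
  haveI : Nonempty {p' : Submodule R M // p'.FG ∧ p' ≤ p} := ⟨⟨⊥, Submodule.fg_bot, bot_le⟩⟩
  have hlt : dim.d M p < (⨆ p' : {p' : Submodule R M // p'.FG ∧ p' ≤ p}, dim.d M p'.1) + ε := by
    rw [← dim.continuity_sup M p]
    exact ENNReal.lt_add_right hfin hε
  rw [ENNReal.iSup_add] at hlt
  obtain ⟨i, hi⟩ := lt_iSup_iff.mp hlt
  exact ⟨i.1, i.2.1, i.2.2, hi.le⟩

/-- ε-approximation of the ambient infimum. -/
lemma exists_ambient_d_le {p : Submodule R M} (hp : p.FG) {ε : ℝ≥0∞} (hε : ε ≠ 0) :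
    ∃ Z : Submodule R M, Z.FG ∧ p ≤ Z ∧
      dim.d ↥Z (p.comap Z.subtype) ≤ dim.d M p + ε := by
  have hfin : dim.d M p ≠ ∞ := d_fg_ne_top dim hp
  have hlt : (⨅ q : {q : Submodule R M // q.FG ∧ p ≤ q}, dim.d q.1 (p.comap q.1.subtype))
      < dim.d M p + ε := by
    rw [← dim.continuity_inf M p hp]
    exact ENNReal.lt_add_right hfin hε
  obtain ⟨i, hi⟩ := iInf_lt_iff.mp hlt
  exact ⟨i.1, i.2.1, i.2.2, hi.le⟩

/-- ε-continuity of relative dimension in the quotienting submodule (f.g. ambient). -/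
lemma exists_fg_quot_le {T : Type u} [AddCommGroup T] [Module R T] [Module.Finite R T]
    (C W : Submodule R T) {ε : ℝ≥0∞} (hε : ε ≠ 0) :
    ∃ C' : Submodule R T, C'.FG ∧ C' ≤ C ∧
      dim.d (T ⧸ C') (W.map C'.mkQ) ≤ dim.d (T ⧸ C) (W.map C.mkQ) + ε := by
  have hCfin : dim.d T C ≠ ∞ := ne_top_of_le_ne_top (d_top_ne_top dim) (d_mono dim le_top)
  obtain ⟨C', hC'fg, hC'le, hC'⟩ := exists_fg_le_d_le dim hCfin hε
  refine ⟨C', hC'fg, hC'le, ?_⟩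
  have h1 : dim.d T (C' ⊔ W) = dim.d T C' + dim.d (T ⧸ C') (W.map C'.mkQ) := by
    have h := d_add_fin dim (le_sup_left : C' ≤ C' ⊔ W)
    rwa [Submodule.map_sup, map_self_mkQ, bot_sup_eq] at h
  have h2 : dim.d T (C ⊔ W) = dim.d T C + dim.d (T ⧸ C) (W.map C.mkQ) := by
    have h := d_add_fin dim (le_sup_left : C ≤ C ⊔ W)
    rwa [Submodule.map_sup, map_self_mkQ, bot_sup_eq] at h
  have main : dim.d T C + dim.d (T ⧸ C') (W.map C'.mkQ)
      ≤ dim.d T C + (dim.d (T ⧸ C) (W.map C.mkQ) + ε) := by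
    calc dim.d T C + dim.d (T ⧸ C') (W.map C'.mkQ)
        ≤ (dim.d T C' + ε) + dim.d (T ⧸ C') (W.map C'.mkQ) := add_le_add_left hC' _
      _ = (dim.d T C' + dim.d (T ⧸ C') (W.map C'.mkQ)) + ε := by ring
      _ = dim.d T (C' ⊔ W) + ε := by rw [← h1]
      _ ≤ dim.d T (C ⊔ W) + ε := add_le_add_left (d_mono dim (sup_le_sup_right hC'le W)) ε
      _ = dim.d T C + (dim.d (T ⧸ C) (W.map C.mkQ) + ε) := by rw [h2]; ring
  exact (ENNReal.add_le_add_iff_left hCfin).mp main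


/-- subadditivity: `dim(p ⊔ w | M) ≤ dim(p | M) + dim((p ⊔ w)/p | M/p)` for f.g. `p`, `w`. -/
lemma d_sup_le {p w : Submodule R M} (hp : p.FG) (hw : w.FG) :
    dim.d M (p ⊔ w) ≤ dim.d M p + dim.d (M ⧸ p) (w.map p.mkQ) := by
  refine ENNReal.le_of_forall_pos_le_add fun ε hε _hlt => ?_
  set δ : ℝ≥0∞ := (ε : ℝ≥0∞) / 2 with hδdef
  have hδ : δ ≠ 0 := by
    simp [hδdef, ENNReal.div_eq_zero_iff, hε.ne']
  obtain ⟨Z₁, hZ₁fg, hpZ₁, hZ₁⟩ := exists_ambient_d_le dim hp hδ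
  obtain ⟨Z₂, hZ₂fg, hwZ₂, hZ₂⟩ := exists_ambient_d_le dim (hw.map p.mkQ) hδ
  set Z₂' : Submodule R (M ⧸ p) := Z₂ ⊔ Z₁.map p.mkQ with hZ₂'def
  have hZ₂'fg : Z₂'.FG := hZ₂fg.sup (hZ₁fg.map _)
  have hwZ₂' : w.map p.mkQ ≤ Z₂' := hwZ₂.trans le_sup_left
  have hcmp : dim.d ↥Z₂' ((w.map p.mkQ).comap Z₂'.subtype)
      ≤ dim.d ↥Z₂ ((w.map p.mkQ).comap Z₂.subtype) := by
    have hZZ : Z₂ ≤ Z₂' := le_sup_left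
    haveI : Module.Finite R ↥Z₂ := Module.Finite.iff_fg.mpr hZ₂fg
    have h := d_map_le dim (Submodule.inclusion hZZ) (Submodule.inclusion_injective hZZ)
      (fg_comap_subtype (hw.map p.mkQ) hwZ₂)
    rwa [comap_inclusion hZZ hwZ₂] at h
  obtain ⟨L, hLfg, -, hLmap⟩ := exists_fg_lift (q := (⊤ : Submodule R M)) hZ₂'fg
    (by rw [Submodule.map_top, Submodule.range_mkQ]; exact le_top)
  set Y : Submodule R M := ((p ⊔ w) ⊔ Z₁) ⊔ L with hYdef
  have hYfg : Y.FG := (((hp.sup hw).sup hZ₁fg).sup hLfg)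
  haveI : Module.Finite R ↥Y := Module.Finite.iff_fg.mpr hYfg
  have hpY : p ≤ Y := le_sup_left.trans (le_sup_left.trans le_sup_left)
  have hwY : w ≤ Y := le_sup_right.trans (le_sup_left.trans le_sup_left)
  have hZ₁Y : Z₁ ≤ Y := le_sup_right.trans le_sup_left
  have hLY : L ≤ Y := le_sup_right
  set C : Submodule R ↥Y := p.comap Y.subtype with hCdef
  set W' : Submodule R ↥Y := w.comap Y.subtype with hW'def
  have step6 : dim.d M (p ⊔ w) ≤ dim.d ↥Y (C ⊔ W') := by
    have h := d_le_ambient dim (hp.sup hw) hYfg (sup_le hpY hwY)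
    rwa [comap_subtype_sup hpY hwY] at h
  have step7 : dim.d ↥Y (C ⊔ W') = dim.d ↥Y C + dim.d (↥Y ⧸ C) (W'.map C.mkQ) := by
    have h := d_add_fin dim (le_sup_left : C ≤ C ⊔ W')
    rwa [Submodule.map_sup, map_self_mkQ, bot_sup_eq] at h
  have step8 : dim.d ↥Y C ≤ dim.d M p + δ := by
    haveI : Module.Finite R ↥Z₁ := Module.Finite.iff_fg.mpr hZ₁fg
    have h := d_map_le dim (Submodule.inclusion hZ₁Y) (Submodule.inclusion_injective hZ₁Y)
      (fg_comap_subtype hp hpZ₁)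
    rw [comap_inclusion hZ₁Y hpZ₁] at h
    exact h.trans hZ₁
  have step9 : dim.d (↥Y ⧸ C) (W'.map C.mkQ) ≤ dim.d (M ⧸ p) (w.map p.mkQ) + δ := by
    have hYmap : Y.map p.mkQ = Z₂' := by
      apply le_antisymm
      · rw [hYdef, Submodule.map_sup, Submodule.map_sup, Submodule.map_sup, map_self_mkQ,
          hLmap]
        exact sup_le (sup_le (sup_le bot_le hwZ₂') le_sup_right) le_rfl
      · rw [← hLmap]
        exact Submodule.map_mono hLY
    rw [d_key dim p hCdef hYmap hwY]
    exact hcmp.trans hZ₂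
  calc dim.d M (p ⊔ w) ≤ dim.d ↥Y C + dim.d (↥Y ⧸ C) (W'.map C.mkQ) := step6.trans_eq step7
    _ ≤ (dim.d M p + δ) + (dim.d (M ⧸ p) (w.map p.mkQ) + δ) := add_le_add step8 step9
    _ = (dim.d M p + dim.d (M ⧸ p) (w.map p.mkQ)) + (δ + δ) := by ring
    _ = (dim.d M p + dim.d (M ⧸ p) (w.map p.mkQ)) + ε := by
        rw [hδdef, ENNReal.add_halves]

/-- the "≥" half of full additivity. -/
lemma d_quot_ge {p q : Submodule R M} (h : p ≤ q) :
    dim.d M p + dim.d (M ⧸ p) (q.map p.mkQ) ≤ dim.d M q := by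
  haveI n1 : Nonempty {x : Submodule R M // x.FG ∧ x ≤ p} := ⟨⟨⊥, Submodule.fg_bot, bot_le⟩⟩
  haveI n2 : Nonempty {x : Submodule R (M ⧸ p) // x.FG ∧ x ≤ q.map p.mkQ} :=
    ⟨⟨⊥, Submodule.fg_bot, bot_le⟩⟩
  rw [dim.continuity_sup M p, dim.continuity_sup (M ⧸ p) (q.map p.mkQ), ENNReal.iSup_add]
  refine iSup_le fun i => ?_
  rw [ENNReal.add_iSup]
  refine iSup_le fun j => ?_
  obtain ⟨L, hLfg, hLq, hLmap⟩ := exists_fg_lift (q := q) j.2.1 j.2.2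
  set q₀ : Submodule R M := i.1 ⊔ L with hq₀def
  have hq₀fg : q₀.FG := i.2.1.sup hLfg
  have hq₀q : q₀ ≤ q := sup_le (i.2.2.trans h) hLq
  have hjq₀ : j.1 ≤ q₀.map p.mkQ := by
    rw [hq₀def, Submodule.map_sup, hLmap]
    exact le_sup_right
  refine le_trans ?_ (d_mono dim hq₀q)
  rw [dim.continuity_inf M q₀ hq₀fg]
  refine le_iInf fun Yi => ?_
  obtain ⟨Y, hYfg, hq₀Y⟩ := Yi
  haveI : Module.Finite R ↥Y := Module.Finite.iff_fg.mpr hYfg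
  set C : Submodule R ↥Y := p.comap Y.subtype with hCdef
  set Q : Submodule R ↥Y := q₀.comap Y.subtype with hQdef
  have hL4 := d_add_fin dim (inf_le_right : C ⊓ Q ≤ Q)
  show dim.d M i.1 + dim.d (M ⧸ p) j.1 ≤ dim.d ↥Y Q
  rw [hL4]
  apply add_le_add
  · have hiY : i.1 ≤ Y := (le_sup_left.trans_eq hq₀def.symm).trans hq₀Y
    have h1 : dim.d M i.1 ≤ dim.d ↥Y (i.1.comap Y.subtype) := d_le_ambient dim i.2.1 hYfg hiY
    refine h1.trans (d_mono dim (le_inf (Submodule.comap_mono i.2.2) ?_))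
    exact Submodule.comap_mono (le_sup_left.trans_eq hq₀def.symm)
  · have hstep : dim.d (↥Y ⧸ C) (Q.map C.mkQ)
        ≤ dim.d (↥Y ⧸ (C ⊓ Q)) (Q.map (C ⊓ Q).mkQ) :=
      d_quot_step dim (inf_le_left : C ⊓ Q ≤ C) Q
    have hkey : dim.d (↥Y ⧸ C) (Q.map C.mkQ)
        = dim.d ↥(Y.map p.mkQ) ((q₀.map p.mkQ).comap (Y.map p.mkQ).subtype) :=
      d_key dim p hCdef rfl hq₀Y
    have hLE : dim.d (M ⧸ p) (q₀.map p.mkQ)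
        ≤ dim.d ↥(Y.map p.mkQ) ((q₀.map p.mkQ).comap (Y.map p.mkQ).subtype) :=
      d_le_ambient dim (hq₀fg.map _) (hYfg.map _) (Submodule.map_mono hq₀Y)
    calc dim.d (M ⧸ p) j.1 ≤ dim.d (M ⧸ p) (q₀.map p.mkQ) := d_mono dim hjq₀
      _ ≤ dim.d ↥(Y.map p.mkQ) ((q₀.map p.mkQ).comap (Y.map p.mkQ).subtype) := hLE
      _ = dim.d (↥Y ⧸ C) (Q.map C.mkQ) := hkey.symm
      _ ≤ dim.d (↥Y ⧸ (C ⊓ Q)) (Q.map (C ⊓ Q).mkQ) := hstep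

/-- the "≤" half of full additivity. -/
lemma d_quot_le {p q : Submodule R M} (h : p ≤ q) :
    dim.d M q ≤ dim.d M p + dim.d (M ⧸ p) (q.map p.mkQ) := by
  rw [dim.continuity_sup M q]
  refine iSup_le fun i => ?_
  obtain ⟨w, hwfg, hwq⟩ := i
  show dim.d M w ≤ _
  by_cases htop : dim.d M p + dim.d (M ⧸ p) (q.map p.mkQ) = ∞
  · exact htop ▸ le_top
  have hfp : dim.d M p ≠ ∞ := fun hh => htop (by rw [hh, top_add])
  refine ENNReal.le_of_forall_pos_le_add fun ε hε _hlt => ?_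
  set δ : ℝ≥0∞ := (ε : ℝ≥0∞) / 2 with hδdef
  have hδ : δ ≠ 0 := by
    simp [hδdef, ENNReal.div_eq_zero_iff, hε.ne']
  obtain ⟨Z, hZfg, hwZ, hZval⟩ := exists_ambient_d_le dim (hwfg.map p.mkQ) hδ
  obtain ⟨L, hLfg, -, hLmap⟩ := exists_fg_lift (q := (⊤ : Submodule R M)) hZfg
    (by rw [Submodule.map_top, Submodule.range_mkQ]; exact le_top)
  set Y : Submodule R M := w ⊔ L with hYdef
  have hYfg : Y.FG := hwfg.sup hLfg
  have hwY : w ≤ Y := le_sup_left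
  have hYmap : Y.map p.mkQ = Z := by
    rw [hYdef, Submodule.map_sup, hLmap]
    exact sup_eq_right.mpr hwZ
  haveI : Module.Finite R ↥Y := Module.Finite.iff_fg.mpr hYfg
  set C : Submodule R ↥Y := p.comap Y.subtype with hCdef
  set W' : Submodule R ↥Y := w.comap Y.subtype with hW'def
  have hCval : dim.d (↥Y ⧸ C) (W'.map C.mkQ) ≤ dim.d (M ⧸ p) (q.map p.mkQ) + δ := by
    rw [d_key dim p hCdef hYmap hwY]
    refine hZval.trans (add_le_add_left (d_mono dim (Submodule.map_mono hwq)) δ)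
  obtain ⟨C', hC'fg, hC'le, hC'val⟩ := exists_fg_quot_le dim C W' hδ
  set p'' : Submodule R M := C'.map Y.subtype with hp''def
  have hp''fg : p''.FG := hC'fg.map _
  have hp''p : p'' ≤ p := by
    calc C'.map Y.subtype ≤ C.map Y.subtype := Submodule.map_mono hC'le
      _ = Y ⊓ p := by rw [hCdef, Submodule.map_comap_subtype]
      _ ≤ p := inf_le_right
  have hcomap : C' = p''.comap Y.subtype := by
    rw [hp''def, Submodule.comap_map_eq, Submodule.ker_subtype, sup_bot_eq]
  have hkey2 : dim.d (↥Y ⧸ C') (W'.map C'.mkQ)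
      = dim.d ↥(Y.map p''.mkQ) ((w.map p''.mkQ).comap (Y.map p''.mkQ).subtype) :=
    d_key dim p'' hcomap rfl hwY
  have hle2 : dim.d (M ⧸ p'') (w.map p''.mkQ)
      ≤ dim.d ↥(Y.map p''.mkQ) ((w.map p''.mkQ).comap (Y.map p''.mkQ).subtype) :=
    d_le_ambient dim (hwfg.map _) (hYfg.map _) (Submodule.map_mono hwY)
  have hsub := d_sup_le dim hp''fg hwfg
  calc dim.d M w ≤ dim.d M (p'' ⊔ w) := d_mono dim le_sup_right
    _ ≤ dim.d M p'' + dim.d (M ⧸ p'') (w.map p''.mkQ) := hsub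
    _ ≤ dim.d M p + (dim.d (↥Y ⧸ C) (W'.map C.mkQ) + δ) := by
        refine add_le_add (d_mono dim hp''p) ?_
        exact (hle2.trans_eq hkey2.symm).trans hC'val
    _ ≤ dim.d M p + ((dim.d (M ⧸ p) (q.map p.mkQ) + δ) + δ) :=
        add_le_add_right (add_le_add_left hCval δ) _
    _ = (dim.d M p + dim.d (M ⧸ p) (q.map p.mkQ)) + (δ + δ) := by ring
    _ = (dim.d M p + dim.d (M ⧸ p) (q.map p.mkQ)) + ε := by rw [hδdef, ENNReal.add_halves]

/-- full additivity for a bivariant Sylvester module rank function. -/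
lemma d_quot {p q : Submodule R M} (h : p ≤ q) :
    dim.d M q = dim.d M p + dim.d (M ⧸ p) (q.map p.mkQ) :=
  le_antisymm (d_quot_le dim h) (d_quot_ge dim h)

end BivSylAux

/-- composition additivity. Let `dim(·|·)` be a bivariant Sylvester
module rank function for `R` and let `rk(α) := dim(im α | cod α)` be the associated
extended Sylvester map rank function. For `α : M₁ → M₂` and `β : M₂ → M₃`,
`rk(β) = rk(αβ) + rk(β/α)`, where `β/α : M₂/im(α) → M₃/im(αβ)` is induced by `β`. -/
theorem bivariantSylvesterRank_comp_additivity (R : Type u) [Ring R]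
    (dim : BivariantSylvesterRank R)
    (M₁ M₂ M₃ : Type u) [AddCommGroup M₁] [Module R M₁] [AddCommGroup M₂] [Module R M₂]
    [AddCommGroup M₃] [Module R M₃]
    (α : M₁ →ₗ[R] M₂) (β : M₂ →ₗ[R] M₃) :
    dim.d M₃ (LinearMap.range β) =
      dim.d M₃ (LinearMap.range (β.comp α)) +
        dim.d (M₃ ⧸ LinearMap.range (β.comp α))
          (LinearMap.range
            (Submodule.mapQ (LinearMap.range α) (LinearMap.range (β.comp α)) β
              (fun x hx => by
                obtain ⟨y, rfl⟩ := hx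
                exact ⟨y, rfl⟩))) := by
  set p : Submodule R M₃ := LinearMap.range (β.comp α) with hpdef
  set q : Submodule R M₃ := LinearMap.range β with hqdef
  have hpq : p ≤ q := by
    rintro x ⟨y, rfl⟩
    exact ⟨α y, rfl⟩
  set φ := Submodule.mapQ (LinearMap.range α) p β
      (fun x hx => by
        obtain ⟨y, rfl⟩ := hx
        exact ⟨y, rfl⟩) with hφdef
  have hrange : LinearMap.range φ = q.map p.mkQ := by
    have h1 : LinearMap.range φ = LinearMap.range (φ.comp (LinearMap.range α).mkQ) :=
      (LinearMap.range_comp_of_range_eq_top φ (Submodule.range_mkQ _)).symm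
    have h2 : φ.comp (LinearMap.range α).mkQ = p.mkQ.comp β := Submodule.mapQ_mkQ (LinearMap.range α) p β
    rw [h1, h2, LinearMap.range_comp]
  rw [hrange]
  exact BivSylAux.d_quot dim hpq
end

section
/- Let R and S be Morita equivalent unital rings with Morita equivalence bimodules _R W_S and _S V_R. Then the induced maps f_V* : P(S) → P(R) and f_W* : P(R) → P(S) on spaces of Sylvester rank functions are mutually inverse bijections (indeed homeomorphisms) that preserve extreme points. -/
universe u
open scoped NNReal ENNReal

/-- `rk` is an extreme point of the convex set of extended Sylvester map rank functions:
it is not a nontrivial convex combination of two distinct such rank functions. -/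
def IsExtremeRank (R : Type u) [Ring R] (rk : ExtendedSylvesterMapRank R) : Prop :=
  ∀ (rk₁ rk₂ : ExtendedSylvesterMapRank R) (t : ℝ≥0∞), 0 < t → t < 1 →
    (∀ (M N : Type u) [AddCommGroup M] [Module R M] [AddCommGroup N] [Module R N]
      (α : M →ₗ[R] N), rk.r α = t * rk₁.r α + (1 - t) * rk₂.r α) →
    rk₁ = rk₂

namespace ExtendedSylvesterMapRank

variable {A : Type u} [Ring A] (rk : ExtendedSylvesterMapRank A)

section RankLemmas

variable {M N P M' N' : Type u} [AddCommGroup M] [Module A M] [AddCommGroup N] [Module A N]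
  [AddCommGroup P] [Module A P] [AddCommGroup M'] [Module A M'] [AddCommGroup N'] [Module A N']

theorem rc_left (α : M →ₗ[A] N) (β : N →ₗ[A] P) : rk.r (β.comp α) ≤ rk.r α :=
  (rk.r_comp α β).trans (min_le_left _ _)

theorem rc_right (α : M →ₗ[A] N) (β : N →ₗ[A] P) : rk.r (β.comp α) ≤ rk.r β :=
  (rk.r_comp α β).trans (min_le_right _ _)

theorem r_equiv_left (g : N ≃ₗ[A] N') (α : M →ₗ[A] N) :
    rk.r ((g : N →ₗ[A] N').comp α) = rk.r α := by
  refine le_antisymm (rk.rc_left _ _) ?_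
  have h : (g.symm : N' →ₗ[A] N).comp ((g : N →ₗ[A] N').comp α) = α := by
    ext x; simp
  calc rk.r α = rk.r ((g.symm : N' →ₗ[A] N).comp ((g : N →ₗ[A] N').comp α)) := by rw [h]
    _ ≤ rk.r ((g : N →ₗ[A] N').comp α) := rk.rc_left _ _

theorem r_equiv_right (f : M' ≃ₗ[A] M) (α : M →ₗ[A] N) :
    rk.r (α.comp (f : M' →ₗ[A] M)) = rk.r α := by
  refine le_antisymm (rk.rc_right _ _) ?_
  have h : (α.comp (f : M' →ₗ[A] M)).comp (f.symm : M →ₗ[A] M') = α := by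
    ext x; simp
  calc rk.r α = rk.r ((α.comp (f : M' →ₗ[A] M)).comp (f.symm : M →ₗ[A] M')) := by rw [h]
    _ ≤ rk.r (α.comp (f : M' →ₗ[A] M)) := rk.rc_right _ _

theorem r_conj (g : N ≃ₗ[A] N') (f : M' ≃ₗ[A] M) (α : M →ₗ[A] N) :
    rk.r (((g : N →ₗ[A] N').comp α).comp (f : M' →ₗ[A] M)) = rk.r α := by
  rw [rk.r_equiv_right, rk.r_equiv_left]

theorem r_id_equiv (q : M ≃ₗ[A] N) :
    rk.r (LinearMap.id : M →ₗ[A] M) = rk.r (LinearMap.id : N →ₗ[A] N) := by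
  have h : (LinearMap.id : N →ₗ[A] N) =
      ((q : M →ₗ[A] N).comp (LinearMap.id : M →ₗ[A] M)).comp (q.symm : N →ₗ[A] M) := by
    ext x; simp
  rw [h, rk.r_conj q q.symm]

theorem r_id_subsingleton [Subsingleton M] : rk.r (LinearMap.id : M →ₗ[A] M) = 0 := by
  have h : (LinearMap.id : M →ₗ[A] M) = 0 := LinearMap.ext fun x => Subsingleton.elim _ _
  rw [h, rk.r_zero]

theorem r_id_prod :
    rk.r (LinearMap.id : (M × N) →ₗ[A] (M × N)) =
      rk.r (LinearMap.id : M →ₗ[A] M) + rk.r (LinearMap.id : N →ₗ[A] N) := by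
  have h : (LinearMap.id : (M × N) →ₗ[A] (M × N)) =
      (LinearMap.id : M →ₗ[A] M).prodMap (LinearMap.id : N →ₗ[A] N) := by ext x <;> rfl
  rw [h, rk.r_prodMap]

/-- `Fin (n+1) → M` is linearly equivalent to `M × (Fin n → M)`. -/
def piFinSuccLinearEquiv (n : ℕ) : (Fin (n + 1) → M) ≃ₗ[A] M × (Fin n → M) where
  toFun x := (x 0, fun i => x i.succ)
  invFun p := Fin.cons p.1 p.2
  map_add' _ _ := rfl
  map_smul' _ _ := rfl
  left_inv x := Fin.cons_self_tail x
  right_inv p := by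
    obtain ⟨a, b⟩ := p
    show ((Fin.cons a b : Fin (n+1) → M) 0, fun i => (Fin.cons a b : Fin (n+1) → M) i.succ)
        = (a, b)
    simp

theorem r_id_pi (n : ℕ) :
    rk.r (LinearMap.id : (Fin n → M) →ₗ[A] (Fin n → M)) =
      (n : ℝ≥0∞) * rk.r (LinearMap.id : M →ₗ[A] M) := by
  induction n with
  | zero =>
    rw [rk.r_id_subsingleton]
    simp
  | succ n ih =>
    rw [rk.r_id_equiv (piFinSuccLinearEquiv (A := A) (M := M) n), rk.r_id_prod, ih]
    push_cast
    ring

theorem r_id_fin_free (n : ℕ) :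
    rk.r (LinearMap.id : (Fin n → A) →ₗ[A] (Fin n → A)) = (n : ℝ≥0∞) := by
  rw [rk.r_id_pi, rk.r_id_ring, mul_one]

theorem r_le_of_surjective (α : M →ₗ[A] N) (hα : Function.Surjective α) :
    rk.r (LinearMap.id : N →ₗ[A] N) ≤ rk.r α := by
  have hr : LinearMap.range α = ⊤ := LinearMap.range_eq_top.mpr hα
  have : Subsingleton (N ⧸ LinearMap.range α) :=
    Submodule.Quotient.subsingleton_iff.mpr hr
  rw [rk.additivity α, rk.r_id_subsingleton, add_zero]

theorem r_id_le_of_surjective (α : M →ₗ[A] N) (hα : Function.Surjective α) :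
    rk.r (LinearMap.id : N →ₗ[A] N) ≤ rk.r (LinearMap.id : M →ₗ[A] M) := by
  refine (rk.r_le_of_surjective α hα).trans ?_
  have : α = α.comp LinearMap.id := by rw [LinearMap.comp_id]
  rw [this]; exact rk.rc_left _ _

theorem r_id_ne_top_of_finite [Module.Finite A M] :
    rk.r (LinearMap.id : M →ₗ[A] M) ≠ ⊤ := by
  obtain ⟨n, q, hq⟩ := Module.Finite.exists_fin' A M
  refine ne_top_of_le_ne_top ?_ (rk.r_id_le_of_surjective q hq)
  rw [rk.r_id_fin_free]
  exact ENNReal.natCast_ne_top n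

end RankLemmas

end ExtendedSylvesterMapRank
namespace MoritaTransfer

set_option linter.unusedSectionVars false

open CategoryTheory

variable {R S : Type u} [Ring R] [Ring S]
variable (e : ModuleCat.{u} R ≌ ModuleCat.{u} S) [e.functor.Additive] [e.inverse.Additive]

/-- The underlying type of the image of a module under the equivalence. -/
abbrev Fob (M : Type u) [AddCommGroup M] [Module R M] : Type u :=
  (e.functor.obj (ModuleCat.of R M) : Type u)

section Maps

variable {M N P Q : Type u} [AddCommGroup M] [Module R M] [AddCommGroup N] [Module R N]
  [AddCommGroup P] [Module R P] [AddCommGroup Q] [Module R Q]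

/-- The image of a linear map under the equivalence, as a linear map. -/
def Fmap (α : M →ₗ[R] N) : Fob e M →ₗ[S] Fob e N :=
  (e.functor.map (ModuleCat.ofHom α)).hom

theorem Fmap_id : Fmap e (LinearMap.id : M →ₗ[R] M) = LinearMap.id :=
  congrArg ModuleCat.Hom.hom (e.functor.map_id (ModuleCat.of R M))

theorem Fmap_comp (α : M →ₗ[R] N) (β : N →ₗ[R] P) :
    Fmap e (β.comp α) = (Fmap e β).comp (Fmap e α) :=
  congrArg ModuleCat.Hom.hom (e.functor.map_comp (ModuleCat.ofHom α) (ModuleCat.ofHom β))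

theorem Fmap_zero : Fmap e (0 : M →ₗ[R] N) = 0 :=
  congrArg ModuleCat.Hom.hom (e.functor.map_zero (ModuleCat.of R M) (ModuleCat.of R N))

theorem Fmap_add (α β : M →ₗ[R] N) : Fmap e (α + β) = Fmap e α + Fmap e β :=
  congrArg ModuleCat.Hom.hom (e.functor.map_add (f := ModuleCat.ofHom α) (g := ModuleCat.ofHom β))

theorem Fmap_surjective (α : M →ₗ[R] N) (hα : Function.Surjective α) :
    Function.Surjective (Fmap e α) := by
  have h1 : Epi (ModuleCat.ofHom α) := (ModuleCat.epi_iff_surjective _).mpr hα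
  have h2 : Functor.PreservesEpimorphisms e.functor :=
    Functor.preservesEpimorphisms_of_adjunction e.toAdjunction
  have h3 : Epi (e.functor.map (ModuleCat.ofHom α)) := Functor.map_epi e.functor _
  exact (ModuleCat.epi_iff_surjective (e.functor.map (ModuleCat.ofHom α))).mp h3

end Maps

section UnitCounit

variable {M N : Type u} [AddCommGroup M] [Module R M] [AddCommGroup N] [Module R N]

/-- The unit of the equivalence, as a linear equivalence. -/
def unitEquiv (M : Type u) [AddCommGroup M] [Module R M] :
    M ≃ₗ[R] (e.inverse.obj (e.functor.obj (ModuleCat.of R M)) : Type u) :=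
  (e.unitIso.app (ModuleCat.of R M)).toLinearEquiv

variable {M' N' : Type u} [AddCommGroup M'] [Module S M'] [AddCommGroup N'] [Module S N']

/-- The image of an `S`-linear map under the inverse equivalence. -/
def Gmap (α : M' →ₗ[S] N') :
    (e.inverse.obj (ModuleCat.of S M') : Type u) →ₗ[R]
      (e.inverse.obj (ModuleCat.of S N') : Type u) :=
  (e.inverse.map (ModuleCat.ofHom α)).hom

/-- The counit of the equivalence, as a linear equivalence. -/
def counitEquiv (M' : Type u) [AddCommGroup M'] [Module S M'] :
    Fob e ((e.inverse.obj (ModuleCat.of S M') : Type u)) ≃ₗ[S] M' :=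
  (e.counitIso.app (ModuleCat.of S M')).toLinearEquiv

theorem unit_natural_apply (α : M →ₗ[R] N) (x : M) :
    unitEquiv e N (α x) = Gmap e (Fmap e α) (unitEquiv e M x) :=
  congrArg (fun φ => ModuleCat.Hom.hom φ x) (e.unit.naturality (ModuleCat.ofHom α))

theorem counit_natural_apply (α : M' →ₗ[S] N')
    (x : Fob e ((e.inverse.obj (ModuleCat.of S M') : Type u))) :
    α (counitEquiv e M' x) = counitEquiv e N' (Fmap e (Gmap e α) x) :=
  (congrArg (fun φ => ModuleCat.Hom.hom φ x) (e.counit.naturality (ModuleCat.ofHom α))).symm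

theorem triangle_apply (x : Fob e M) :
    counitEquiv e (Fob e M) (Fmap e (unitEquiv e M).toLinearMap x) = x :=
  congrArg (fun φ => ModuleCat.Hom.hom φ x) (e.functor_unit_comp (ModuleCat.of R M))

end UnitCounit
section Prod

variable {M N P Q : Type u} [AddCommGroup M] [Module R M] [AddCommGroup N] [Module R N]
  [AddCommGroup P] [Module R P] [AddCommGroup Q] [Module R Q]

/-- An additive functor preserves binary products. -/
def prodEquivF : Fob e (M × N) ≃ₗ[S] Fob e M × Fob e N := by
  refine LinearEquiv.ofLinear
    (LinearMap.prod (Fmap e (LinearMap.fst R M N)) (Fmap e (LinearMap.snd R M N)))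
    ((Fmap e (LinearMap.inl R M N)).coprod (Fmap e (LinearMap.inr R M N))) ?_ ?_
  · apply LinearMap.ext
    rintro ⟨a, b⟩
    have h11 : (LinearMap.fst R M N).comp (LinearMap.inl R M N) = LinearMap.id :=
      LinearMap.ext fun x => rfl
    have h12 : (LinearMap.fst R M N).comp (LinearMap.inr R M N) = 0 :=
      LinearMap.ext fun x => rfl
    have h21 : (LinearMap.snd R M N).comp (LinearMap.inl R M N) = 0 :=
      LinearMap.ext fun x => rfl
    have h22 : (LinearMap.snd R M N).comp (LinearMap.inr R M N) = LinearMap.id :=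
      LinearMap.ext fun x => rfl
    have e11 := congrArg (Fmap e) h11; rw [Fmap_comp, Fmap_id] at e11
    have e12 := congrArg (Fmap e) h12; rw [Fmap_comp, Fmap_zero] at e12
    have e21 := congrArg (Fmap e) h21; rw [Fmap_comp, Fmap_zero] at e21
    have e22 := congrArg (Fmap e) h22; rw [Fmap_comp, Fmap_id] at e22
    simp only [LinearMap.comp_apply, LinearMap.coprod_apply, LinearMap.prod_apply,
      LinearMap.id_apply, Pi.prod, map_add]
    refine Prod.ext ?_ ?_
    · have := DFunLike.congr_fun e11 a
      have h2 := DFunLike.congr_fun e12 b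
      simp only [LinearMap.comp_apply, LinearMap.id_apply, LinearMap.zero_apply] at this h2
      simp [this, h2]
    · have := DFunLike.congr_fun e21 a
      have h2 := DFunLike.congr_fun e22 b
      simp only [LinearMap.comp_apply, LinearMap.id_apply, LinearMap.zero_apply] at this h2
      simp [this, h2]
  · have h : (LinearMap.inl R M N).comp (LinearMap.fst R M N)
        + (LinearMap.inr R M N).comp (LinearMap.snd R M N) = LinearMap.id := by
      apply LinearMap.ext; rintro ⟨a, b⟩
      simp
    have h' := congrArg (Fmap e) h
    rw [Fmap_add, Fmap_comp, Fmap_comp, Fmap_id] at h'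
    apply LinearMap.ext
    intro x
    have := DFunLike.congr_fun h' x
    simp only [LinearMap.add_apply, LinearMap.comp_apply, LinearMap.id_apply] at this
    simpa [LinearMap.coprod_apply, LinearMap.prod_apply, Pi.prod] using this

theorem prodEquivF_apply_fst (x : Fob e (M × N)) :
    (prodEquivF e x).1 = Fmap e (LinearMap.fst R M N) x := rfl

theorem prodEquivF_apply_snd (x : Fob e (M × N)) :
    (prodEquivF e x).2 = Fmap e (LinearMap.snd R M N) x := rfl

theorem key_prodMap (α : M →ₗ[R] N) (β : P →ₗ[R] Q) :
    ((prodEquivF e : Fob e (N × Q) ≃ₗ[S] _) : Fob e (N × Q) →ₗ[S] _).comp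
        (Fmap e (α.prodMap β)) =
      ((Fmap e α).prodMap (Fmap e β)).comp
        ((prodEquivF e : Fob e (M × P) ≃ₗ[S] _) : Fob e (M × P) →ₗ[S] _) := by
  have hf : (LinearMap.fst R N Q).comp (α.prodMap β) = α.comp (LinearMap.fst R M P) :=
    LinearMap.ext fun x => rfl
  have hs : (LinearMap.snd R N Q).comp (α.prodMap β) = β.comp (LinearMap.snd R M P) :=
    LinearMap.ext fun x => rfl
  have Hf := congrArg (Fmap e) hf; rw [Fmap_comp, Fmap_comp] at Hf
  have Hs := congrArg (Fmap e) hs; rw [Fmap_comp, Fmap_comp] at Hs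
  apply LinearMap.ext
  intro x
  refine Prod.ext ?_ ?_
  · show (prodEquivF e (Fmap e (α.prodMap β) x)).1 = _
    rw [prodEquivF_apply_fst]
    exact DFunLike.congr_fun Hf x
  · show (prodEquivF e (Fmap e (α.prodMap β) x)).2 = _
    rw [prodEquivF_apply_snd]
    exact DFunLike.congr_fun Hs x

theorem r_Fmap_prodMap (rk : ExtendedSylvesterMapRank S) (α : M →ₗ[R] N) (β : P →ₗ[R] Q) :
    rk.r (Fmap e (α.prodMap β)) = rk.r (Fmap e α) + rk.r (Fmap e β) := by
  have h : (((prodEquivF e : Fob e (N × Q) ≃ₗ[S] _) : Fob e (N × Q) →ₗ[S] _).comp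
      (Fmap e (α.prodMap β))).comp
      (((prodEquivF e : Fob e (M × P) ≃ₗ[S] _).symm :
        (Fob e M × Fob e P) →ₗ[S] Fob e (M × P))) = (Fmap e α).prodMap (Fmap e β) := by
    rw [key_prodMap]
    apply LinearMap.ext
    intro x
    simp
  have h2 := rk.r_conj (prodEquivF e) (prodEquivF e).symm (Fmap e (α.prodMap β))
  rw [h] at h2
  rw [← h2, rk.r_prodMap]

end Prod
section Gmaps

variable {M' N' P' : Type u} [AddCommGroup M'] [Module S M'] [AddCommGroup N'] [Module S N']
  [AddCommGroup P'] [Module S P']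

theorem Gmap_comp (α : M' →ₗ[S] N') (β : N' →ₗ[S] P') :
    Gmap e (β.comp α) = (Gmap e β).comp (Gmap e α) :=
  congrArg ModuleCat.Hom.hom (e.inverse.map_comp (ModuleCat.ofHom α) (ModuleCat.ofHom β))

theorem Gmap_zero : Gmap e (0 : M' →ₗ[S] N') = 0 :=
  congrArg ModuleCat.Hom.hom (e.inverse.map_zero (ModuleCat.of S M') (ModuleCat.of S N'))

end Gmaps

section Subsing

variable {M N : Type u} [AddCommGroup M] [Module R M] [AddCommGroup N] [Module R N]

theorem Fob_subsingleton [Subsingleton M] : Subsingleton (Fob e M) := by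
  have h : (LinearMap.id : M →ₗ[R] M) = 0 := LinearMap.ext fun x => Subsingleton.elim _ _
  have h' := congrArg (Fmap e) h
  rw [Fmap_id, Fmap_zero] at h'
  refine ⟨fun a b => ?_⟩
  have ha : a = 0 := by
    have := DFunLike.congr_fun h' a
    simpa using this
  have hb : b = 0 := by
    have := DFunLike.congr_fun h' b
    simpa using this
  rw [ha, hb]

end Subsing

section Coker

variable {M N : Type u} [AddCommGroup M] [Module R M] [AddCommGroup N] [Module R N]

/-- An additive equivalence preserves cokernels. -/
noncomputable def cokerEquivF (α : M →ₗ[R] N) :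
    Fob e (N ⧸ LinearMap.range α) ≃ₗ[S] (Fob e N ⧸ LinearMap.range (Fmap e α)) := by
  set π : N →ₗ[R] (N ⧸ LinearMap.range α) := (LinearMap.range α).mkQ with hπ
  set π' : Fob e N →ₗ[S] (Fob e N ⧸ LinearMap.range (Fmap e α)) :=
    (LinearMap.range (Fmap e α)).mkQ with hπ'
  have hπα : π.comp α = 0 := by
    apply LinearMap.ext
    intro x
    simp [π, Submodule.Quotient.mk_eq_zero]
  have hπ'F : π'.comp (Fmap e α) = 0 := by
    apply LinearMap.ext
    intro x
    simp [π', Submodule.Quotient.mk_eq_zero]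
  -- the map u : coker (Fmap α) → Fob (coker α)
  have hker : LinearMap.range (Fmap e α) ≤ LinearMap.ker (Fmap e π) := by
    rintro - ⟨x, rfl⟩
    show Fmap e π (Fmap e α x) = 0
    rw [← LinearMap.comp_apply, ← Fmap_comp, hπα, Fmap_zero]
    rfl
  set u : (Fob e N ⧸ LinearMap.range (Fmap e α)) →ₗ[S] Fob e (N ⧸ LinearMap.range α) :=
    Submodule.liftQ _ (Fmap e π) hker with hu
  have hu' : u.comp π' = Fmap e π := Submodule.liftQ_mkQ _ _ _
  -- the map v0 : coker α → G (coker (Fmap α))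
  have hcond : ∀ x ∈ LinearMap.range α,
      ((Gmap e π').comp (unitEquiv e N).toLinearMap) x = 0 := by
    rintro - ⟨m, rfl⟩
    show Gmap e π' (unitEquiv e N (α m)) = 0
    rw [unit_natural_apply, ← LinearMap.comp_apply, ← Gmap_comp, hπ'F, Gmap_zero]
    rfl
  set v0 : (N ⧸ LinearMap.range α) →ₗ[R]
      (e.inverse.obj (ModuleCat.of S (Fob e N ⧸ LinearMap.range (Fmap e α))) : Type u) :=
    Submodule.liftQ _ ((Gmap e π').comp (unitEquiv e N).toLinearMap) hcond with hv0
  have hv0' : v0.comp π = (Gmap e π').comp (unitEquiv e N).toLinearMap :=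
    Submodule.liftQ_mkQ _ _ _
  set w : Fob e (N ⧸ LinearMap.range α) →ₗ[S] (Fob e N ⧸ LinearMap.range (Fmap e α)) :=
    (counitEquiv e _).toLinearMap.comp (Fmap e v0) with hw
  have hwπ : w.comp (Fmap e π) = π' := by
    apply LinearMap.ext
    intro x
    show counitEquiv e _ (Fmap e v0 (Fmap e π x)) = π' x
    rw [← LinearMap.comp_apply, ← Fmap_comp, hv0', Fmap_comp, LinearMap.comp_apply]
    have step := counit_natural_apply e π' (Fmap e (unitEquiv e N).toLinearMap x)
    exact step.symm.trans (congrArg π' (triangle_apply e x))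
  have hFπ : Function.Surjective (Fmap e π) :=
    Fmap_surjective e π (Submodule.mkQ_surjective _)
  refine LinearEquiv.ofLinear w u ?_ ?_
  · -- w.comp u = id
    apply Submodule.linearMap_qext
    rw [LinearMap.comp_assoc, hu', hwπ]
    rfl
  · -- u.comp w = id
    apply LinearMap.ext
    intro x
    obtain ⟨y, rfl⟩ := hFπ x
    have h1 : w (Fmap e π y) = π' y := DFunLike.congr_fun hwπ y
    have h2 : u (π' y) = Fmap e π y := DFunLike.congr_fun hu' y
    simp only [LinearMap.comp_apply, LinearMap.id_apply, h1, h2]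

end Coker
section DL

variable (J : Type u) [Preorder J] [IsDirected J (· ≤ ·)] [Nonempty J] [DecidableEq J]
  (G : J → Type u) [∀ j, AddCommGroup (G j)] [∀ j, Module R (G j)]
  (f : ∀ i j, i ≤ j → G i →ₗ[R] G j) [DirectedSystem G (fun i j h => f i j h)]

theorem f_self (i : J) : f i i le_rfl = LinearMap.id :=
  LinearMap.ext fun x => DirectedSystem.map_self (f := fun i j h => ⇑(f i j h)) x

theorem f_trans {i j k : J} (hij : i ≤ j) (hjk : j ≤ k) :
    (f j k hjk).comp (f i j hij) = f i k (hij.trans hjk) :=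
  LinearMap.ext fun x => DirectedSystem.map_map (f := fun i j h => ⇑(f i j h)) hij hjk x

theorem dirSysF :
    DirectedSystem (fun j => Fob e (G j)) (fun i j h x => Fmap e (f i j h) x) := by
  constructor
  · intro i x
    have h := congrArg (Fmap e) (f_self J G f i)
    rw [Fmap_id] at h
    exact DFunLike.congr_fun h x
  · intro k j i hij hjk x
    have h := congrArg (Fmap e) (f_trans J G f hij hjk)
    rw [Fmap_comp] at h
    exact DFunLike.congr_fun h x

/-- Forward map: direct limit of images to image of direct limit. -/
noncomputable def dlToF :
    Module.DirectLimit (fun j => Fob e (G j)) (fun i j h => Fmap e (f i j h)) →ₗ[S]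
      Fob e (Module.DirectLimit G f) :=
  Module.DirectLimit.lift S J (fun j => Fob e (G j)) (fun i j h => Fmap e (f i j h))
    (fun j => Fmap e (Module.DirectLimit.of R J G f j))
    (by
      intro i j hij x
      have h : (Module.DirectLimit.of R J G f j).comp (f i j hij) =
          Module.DirectLimit.of R J G f i := LinearMap.ext fun y => Module.DirectLimit.of_f
      have h' := congrArg (Fmap e) h
      rw [Fmap_comp] at h'
      exact DFunLike.congr_fun h' x)

theorem dlToF_of (j : J) (x : Fob e (G j)) :
    dlToF e J G f (Module.DirectLimit.of S J (fun j => Fob e (G j))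
      (fun i j h => Fmap e (f i j h)) j x) = Fmap e (Module.DirectLimit.of R J G f j) x :=
  Module.DirectLimit.lift_of _ _ _

/-- Auxiliary map into the inverse image of the direct limit of images. -/
noncomputable def dlU :
    Module.DirectLimit G f →ₗ[R]
      (e.inverse.obj (ModuleCat.of S (Module.DirectLimit (fun j => Fob e (G j))
        (fun i j h => Fmap e (f i j h)))) : Type u) :=
  Module.DirectLimit.lift R J G f
    (fun j => (Gmap e (Module.DirectLimit.of S J (fun j => Fob e (G j))
        (fun i j h => Fmap e (f i j h)) j)).comp (unitEquiv e (G j)).toLinearMap)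
    (by
      intro i j hij x
      show Gmap e _ (unitEquiv e (G j) (f i j hij x)) = Gmap e _ (unitEquiv e (G i) x)
      rw [unit_natural_apply]
      rw [← LinearMap.comp_apply, ← Gmap_comp]
      have h : (Module.DirectLimit.of S J (fun j => Fob e (G j))
          (fun i j h => Fmap e (f i j h)) j).comp (Fmap e (f i j hij)) =
          Module.DirectLimit.of S J (fun j => Fob e (G j)) (fun i j h => Fmap e (f i j h)) i :=
        LinearMap.ext fun y => Module.DirectLimit.of_f
      rw [h])

theorem dlU_of (j : J) (x : G j) :
    dlU e J G f (Module.DirectLimit.of R J G f j x) =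
      Gmap e (Module.DirectLimit.of S J (fun j => Fob e (G j))
        (fun i j h => Fmap e (f i j h)) j) (unitEquiv e (G j) x) :=
  Module.DirectLimit.lift_of _ _ _

/-- Backward map. -/
noncomputable def dlBack :
    Fob e (Module.DirectLimit G f) →ₗ[S]
      Module.DirectLimit (fun j => Fob e (G j)) (fun i j h => Fmap e (f i j h)) :=
  (counitEquiv e _).toLinearMap.comp (Fmap e (dlU e J G f))

/-- An additive equivalence commutes with direct limits of modules. -/
noncomputable def dlEquivF :
    Module.DirectLimit (fun j => Fob e (G j)) (fun i j h => Fmap e (f i j h)) ≃ₗ[S]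
      Fob e (Module.DirectLimit G f) := by
  refine LinearEquiv.ofLinear (dlToF e J G f) (dlBack e J G f) ?_ ?_
  · -- toF ∘ back = id
    have claim : ∀ z : Module.DirectLimit G f,
        Gmap e (dlToF e J G f) (dlU e J G f z) = unitEquiv e (Module.DirectLimit G f) z := by
      intro z
      induction z using Module.DirectLimit.induction_on with
      | ih j x =>
        rw [dlU_of]
        rw [← LinearMap.comp_apply, ← Gmap_comp]
        have hcomp : (dlToF e J G f).comp (Module.DirectLimit.of S J (fun j => Fob e (G j))
            (fun i j h => Fmap e (f i j h)) j) = Fmap e (Module.DirectLimit.of R J G f j) :=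
          LinearMap.ext fun y => dlToF_of e J G f j y
        rw [hcomp]
        exact (unit_natural_apply e (Module.DirectLimit.of R J G f j) x).symm
    apply LinearMap.ext
    intro y
    rw [LinearMap.comp_apply, LinearMap.id_apply]
    show dlToF e J G f (counitEquiv e _ (Fmap e (dlU e J G f) y)) = y
    have step := counit_natural_apply e (dlToF e J G f) (Fmap e (dlU e J G f) y)
    rw [step]
    rw [← LinearMap.comp_apply, ← Fmap_comp]
    have hcl : (Gmap e (dlToF e J G f)).comp (dlU e J G f) =
        (unitEquiv e (Module.DirectLimit G f)).toLinearMap :=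
      LinearMap.ext fun z => claim z
    rw [hcl]
    exact triangle_apply e y
  · -- back ∘ toF = id
    apply LinearMap.ext
    intro z
    induction z using Module.DirectLimit.induction_on with
    | ih j x =>
      rw [LinearMap.comp_apply, LinearMap.id_apply, dlToF_of]
      show counitEquiv e _ (Fmap e (dlU e J G f)
        (Fmap e (Module.DirectLimit.of R J G f j) x)) = _
      rw [← LinearMap.comp_apply, ← Fmap_comp]
      have hcomp : (dlU e J G f).comp (Module.DirectLimit.of R J G f j) =
          (Gmap e (Module.DirectLimit.of S J (fun j => Fob e (G j))
            (fun i j h => Fmap e (f i j h)) j)).comp (unitEquiv e (G j)).toLinearMap :=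
        LinearMap.ext fun y => dlU_of e J G f j y
      rw [hcomp, Fmap_comp, LinearMap.comp_apply]
      have step := counit_natural_apply e
        (Module.DirectLimit.of S J (fun j => Fob e (G j)) (fun i j h => Fmap e (f i j h)) j)
        (Fmap e (unitEquiv e (G j)).toLinearMap x)
      exact step.symm.trans (congrArg _ (triangle_apply e x))

theorem dlEquivF_of (j : J) (x : Fob e (G j)) :
    dlEquivF e J G f (Module.DirectLimit.of S J (fun j => Fob e (G j))
      (fun i j h => Fmap e (f i j h)) j x) =
      Fmap e (Module.DirectLimit.of R J G f j) x := by
  exact dlToF_of e J G f j x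

end DL
section FGDL

variable (A : Type u) [Ring A] (V : Type u) [AddCommGroup V] [Module A V]

/-- Index type: finitely generated submodules of `V`. -/
abbrev FGSub : Type u := {P : Submodule A V // P.FG}

instance : Nonempty (FGSub A V) := ⟨⟨⊥, Submodule.fg_bot⟩⟩

instance : IsDirected (FGSub A V) (· ≤ ·) :=
  ⟨fun a b => ⟨⟨a.1 ⊔ b.1, a.2.sup b.2⟩, show a.1 ≤ a.1 ⊔ b.1 from le_sup_left,
    show b.1 ≤ a.1 ⊔ b.1 from le_sup_right⟩⟩

/-- The directed system of finitely generated submodules. -/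
abbrev fgSys (j : FGSub A V) : Type u := ↥j.1

/-- Inclusion maps of the directed system. -/
abbrev fgIncl (i j : FGSub A V) (h : i ≤ j) : fgSys A V i →ₗ[A] fgSys A V j :=
  Submodule.inclusion h

instance : DirectedSystem (fgSys A V) (fun i j h x => fgIncl A V i j h x) := by
  constructor
  · intro i x; rfl
  · intro k j i hij hjk x; rfl

variable [DecidableEq (FGSub A V)]

/-- Every module is the direct limit of its finitely generated submodules. -/
noncomputable def fgDLEquiv : Module.DirectLimit (fgSys A V) (fgIncl A V) ≃ₗ[A] V := by
  have compat : ∀ (i j : FGSub A V) (hij : i ≤ j) (x : fgSys A V i),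
      j.1.subtype (fgIncl A V i j hij x) = i.1.subtype x := fun i j hij x => rfl
  set L : Module.DirectLimit (fgSys A V) (fgIncl A V) →ₗ[A] V :=
    Module.DirectLimit.lift A (FGSub A V) (fgSys A V) (fgIncl A V)
      (fun j => j.1.subtype) compat with hL
  have hbij : Function.Bijective L := by
    constructor
    · refine (injective_iff_map_eq_zero L).mpr ?_
      intro z hz
      obtain ⟨i, x, rfl⟩ := Module.DirectLimit.exists_of z
      have hx : L (Module.DirectLimit.of A (FGSub A V) (fgSys A V) (fgIncl A V) i x)
          = (x : V) := Module.DirectLimit.lift_of _ _ _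
      have : (x : V) = 0 := by rw [← hx, hz]
      have hx0 : x = 0 := Subtype.ext this
      rw [hx0, map_zero]
    · intro v
      refine ⟨Module.DirectLimit.of A (FGSub A V) (fgSys A V) (fgIncl A V)
        ⟨Submodule.span A {v}, Submodule.fg_span_singleton v⟩
        ⟨v, Submodule.mem_span_singleton_self v⟩, ?_⟩
      exact Module.DirectLimit.lift_of _ _ _
  exact LinearEquiv.ofBijective L hbij

end FGDL
section Finiteness

instance symmFunctorAdditive : e.symm.functor.Additive := inferInstanceAs e.inverse.Additive

instance symmInverseAdditive : e.symm.inverse.Additive := inferInstanceAs e.functor.Additive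

variable {M N : Type u} [AddCommGroup M] [Module R M] [AddCommGroup N] [Module R N]

/-- Transport of a linear equivalence through the equivalence of categories. -/
noncomputable def FobEquiv (q : M ≃ₗ[R] N) : Fob e M ≃ₗ[S] Fob e N := by
  refine LinearEquiv.ofLinear (Fmap e q.toLinearMap) (Fmap e q.symm.toLinearMap) ?_ ?_
  · have h : q.toLinearMap.comp q.symm.toLinearMap = LinearMap.id := by
      apply LinearMap.ext; intro x; simp
    rw [← Fmap_comp, h, Fmap_id]
  · have h : q.symm.toLinearMap.comp q.toLinearMap = LinearMap.id := by
      apply LinearMap.ext; intro x; simp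
    rw [← Fmap_comp, h, Fmap_id]

theorem finite_of_subsingleton (B : Type u) [Ring B] (X : Type u) [AddCommGroup X]
    [Module B X] [Subsingleton X] : Module.Finite B X := by
  rw [Module.finite_def]
  refine ⟨∅, eq_top_iff.mpr fun x _ => ?_⟩
  rw [Subsingleton.elim x 0]
  exact Submodule.zero_mem _

/-- The image of the base ring is a finitely generated module. -/
theorem finite_FobRing : Module.Finite S (Fob e R) := by
  classical
  set V := Fob e R with hV
  letI : DecidableEq (FGSub S V) := Classical.decEq _
  set dl := fgDLEquiv S V with hdl
  set dlE := dlEquivF e.symm (FGSub S V) (fgSys S V) (fgIncl S V) with hdlE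
  have ρ : R ≃ₗ[R] Fob e.symm V := unitEquiv e R
  set z := dlE.symm (Fmap e.symm dl.symm.toLinearMap (ρ 1)) with hz
  obtain ⟨j₀, x, hx⟩ := Module.DirectLimit.exists_of z
  set σ : Fob e.symm (fgSys S V j₀) →ₗ[R] R :=
    ρ.symm.toLinearMap.comp ((Fmap e.symm dl.toLinearMap).comp
      (dlE.toLinearMap.comp (Module.DirectLimit.of R (FGSub S V)
        (fun j => Fob e.symm (fgSys S V j)) (fun i j h => Fmap e.symm (fgIncl S V i j h)) j₀)))
    with hσdef
  have hσ1 : σ x = 1 := by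
    show ρ.symm (Fmap e.symm dl.toLinearMap (dlE (Module.DirectLimit.of R (FGSub S V)
      (fun j => Fob e.symm (fgSys S V j)) (fun i j h => Fmap e.symm (fgIncl S V i j h))
      j₀ x))) = 1
    rw [hx, hz, LinearEquiv.apply_symm_apply]
    rw [← LinearMap.comp_apply, ← Fmap_comp]
    have h : dl.toLinearMap.comp dl.symm.toLinearMap = LinearMap.id := by
      apply LinearMap.ext; intro y; simp
    rw [h, Fmap_id, LinearMap.id_apply, LinearEquiv.symm_apply_apply]
  have hσ : Function.Surjective σ := by
    intro r
    refine ⟨r • x, ?_⟩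
    rw [map_smul, hσ1, smul_eq_mul, mul_one]
  haveI : Module.Finite S (fgSys S V j₀) := Module.Finite.iff_fg.mpr j₀.2
  haveI : Module.Finite S (Fob e (Fob e.symm (fgSys S V j₀))) :=
    Module.Finite.equiv (counitEquiv e (fgSys S V j₀)).symm
  exact Module.Finite.of_surjective (Fmap e σ) (Fmap_surjective e σ hσ)

theorem finite_FobPow (n : ℕ) : Module.Finite S (Fob e (Fin n → R)) := by
  induction n with
  | zero =>
    haveI : Subsingleton (Fin 0 → R) := ⟨fun a b => funext fun i => i.elim0⟩
    haveI := Fob_subsingleton e (M := Fin 0 → R)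
    exact finite_of_subsingleton S _
  | succ n ih =>
    haveI := ih
    haveI : Module.Finite S (Fob e R) := finite_FobRing e
    haveI : Module.Finite S (Fob e R × Fob e (Fin n → R)) := Module.Finite.prod
    have q := (FobEquiv e (ExtendedSylvesterMapRank.piFinSuccLinearEquiv (A := R)
      (M := R) n)).trans (prodEquivF e)
    exact Module.Finite.equiv q.symm

theorem finite_Fob (hM : Module.Finite R M) : Module.Finite S (Fob e M) := by
  obtain ⟨n, q, hq⟩ := Module.Finite.exists_fin' R M
  haveI := finite_FobPow e n
  exact Module.Finite.of_surjective (Fmap e q) (Fmap_surjective e q hq)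

end Finiteness
section Constants

variable (rk : ExtendedSylvesterMapRank S)

/-- The normalizing constant: the rank of the identity of the image of the base ring. -/
noncomputable def cconst : ℝ≥0∞ := rk.r (LinearMap.id : Fob e R →ₗ[S] Fob e R)

theorem r_id_FobPow (n : ℕ) :
    rk.r (LinearMap.id : Fob e (Fin n → R) →ₗ[S] Fob e (Fin n → R)) =
      (n : ℝ≥0∞) * cconst e rk := by
  induction n with
  | zero =>
    haveI : Subsingleton (Fin 0 → R) := ⟨fun a b => funext fun i => i.elim0⟩
    haveI := Fob_subsingleton e (M := Fin 0 → R)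
    rw [rk.r_id_subsingleton]
    simp
  | succ n ih =>
    have q := (FobEquiv e (ExtendedSylvesterMapRank.piFinSuccLinearEquiv (A := R)
      (M := R) n)).trans (prodEquivF e)
    rw [rk.r_id_equiv q, rk.r_id_prod, ih]
    show cconst e rk + _ = _
    push_cast
    ring

theorem cconst_ne_top : cconst e rk ≠ ⊤ := by
  haveI := finite_FobRing e
  exact rk.r_id_ne_top_of_finite

theorem cconst_ne_zero : cconst e rk ≠ 0 := by
  haveI : Module.Finite R (Fob e.symm S) := finite_FobRing e.symm
  obtain ⟨m, q, hq⟩ := Module.Finite.exists_fin' R (Fob e.symm S)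
  set p : Fob e (Fin m → R) →ₗ[S] S := (counitEquiv e S).toLinearMap.comp (Fmap e q) with hp
  have hps : Function.Surjective p :=
    (counitEquiv e S).surjective.comp (Fmap_surjective e q hq)
  obtain ⟨x, hx⟩ := hps 1
  set i : S →ₗ[S] Fob e (Fin m → R) := LinearMap.toSpanSingleton S _ x with hi
  have hpi : p.comp i = LinearMap.id := by
    apply LinearMap.ext; intro s
    show p (s • x) = s
    rw [map_smul, hx, smul_eq_mul, mul_one]
  intro hc0
  have hle : (1 : ℝ≥0∞) ≤ (m : ℝ≥0∞) * cconst e rk := by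
    calc (1 : ℝ≥0∞) = rk.r (LinearMap.id : S →ₗ[S] S) := rk.r_id_ring.symm
      _ = rk.r (p.comp i) := by rw [hpi]
      _ ≤ rk.r i := rk.rc_left _ _
      _ = rk.r ((LinearMap.id : Fob e (Fin m → R) →ₗ[S] Fob e (Fin m → R)).comp i) := by
          rw [LinearMap.id_comp]
      _ ≤ rk.r (LinearMap.id : Fob e (Fin m → R) →ₗ[S] Fob e (Fin m → R)) := rk.rc_right _ _
      _ = (m : ℝ≥0∞) * cconst e rk := r_id_FobPow e rk m
  rw [hc0, mul_zero] at hle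
  simp at hle

end Constants
section Transfer

/-- The transfer of a Sylvester rank function along the equivalence. -/
noncomputable def transferRank (rk : ExtendedSylvesterMapRank S) :
    ExtendedSylvesterMapRank R where
  r {M N} _ _ _ _ α := rk.r (Fmap e α) / cconst e rk
  r_zero M N _ _ _ _ := by
    show rk.r (Fmap e (0 : M →ₗ[R] N)) / cconst e rk = 0
    rw [Fmap_zero, rk.r_zero]
    exact ENNReal.zero_div
  r_id_ring := by
    show rk.r (Fmap e (LinearMap.id : R →ₗ[R] R)) / cconst e rk = 1
    rw [Fmap_id]
    exact ENNReal.div_self (cconst_ne_zero e rk) (cconst_ne_top e rk)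
  r_comp {M N P} _ _ _ _ _ _ α β := by
    show rk.r (Fmap e (β.comp α)) / cconst e rk ≤
      min (rk.r (Fmap e α) / cconst e rk) (rk.r (Fmap e β) / cconst e rk)
    have h := rk.r_comp (Fmap e α) (Fmap e β)
    rw [← Fmap_comp] at h
    exact le_min (ENNReal.div_le_div_right (h.trans (min_le_left _ _)) _)
      (ENNReal.div_le_div_right (h.trans (min_le_right _ _)) _)
  r_prodMap {M N P Q} _ _ _ _ _ _ _ _ α β := by
    show rk.r (Fmap e (α.prodMap β)) / cconst e rk =
      rk.r (Fmap e α) / cconst e rk + rk.r (Fmap e β) / cconst e rk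
    rw [r_Fmap_prodMap, ENNReal.add_div]
  continuity_from J _ _ _ _ G _ _ f _ M _ _ α αlim hcompat hlim := by
    haveI := dirSysF e J G f
    have hc1 : ∀ (i j : J) (h : i ≤ j),
        (Fmap e (α j)).comp (Fmap e (f i j h)) = Fmap e (α i) := by
      intro i j h
      rw [← Fmap_comp, hcompat i j h]
    have hc2 : ∀ j : J,
        ((Fmap e αlim).comp (dlEquivF e J G f :
            Module.DirectLimit (fun j => Fob e (G j)) (fun i j h => Fmap e (f i j h)) →ₗ[S]
              Fob e (Module.DirectLimit G f))).comp
          (Module.DirectLimit.of S J (fun j => Fob e (G j))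
            (fun i j h => Fmap e (f i j h)) j) = Fmap e (α j) := by
      intro j
      apply LinearMap.ext
      intro x
      show Fmap e αlim (dlEquivF e J G f (Module.DirectLimit.of S J (fun j => Fob e (G j))
        (fun i j h => Fmap e (f i j h)) j x)) = Fmap e (α j) x
      rw [dlEquivF_of, ← LinearMap.comp_apply, ← Fmap_comp, hlim j]
    have main := rk.continuity_from J (fun j => Fob e (G j)) (fun i j h => Fmap e (f i j h))
      (Fob e M) (fun j => Fmap e (α j))
      ((Fmap e αlim).comp (dlEquivF e J G f :
        Module.DirectLimit (fun j => Fob e (G j)) (fun i j h => Fmap e (f i j h)) →ₗ[S]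
          Fob e (Module.DirectLimit G f))) hc1 hc2
    have hr : rk.r ((Fmap e αlim).comp (dlEquivF e J G f :
        Module.DirectLimit (fun j => Fob e (G j)) (fun i j h => Fmap e (f i j h)) →ₗ[S]
          Fob e (Module.DirectLimit G f))) = rk.r (Fmap e αlim) :=
      rk.r_equiv_right (dlEquivF e J G f) (Fmap e αlim)
    rw [hr] at main
    show Filter.Tendsto (fun j => rk.r (Fmap e (α j)) / cconst e rk) Filter.atTop
      (nhds (rk.r (Fmap e αlim) / cconst e rk))
    exact ENNReal.Tendsto.div_const main (Or.inr (cconst_ne_zero e rk))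
  continuity_to J _ _ _ _ G _ _ f _ M _ _ hM α αlim hcompat hlim := by
    haveI := dirSysF e J G f
    haveI : Module.Finite S (Fob e M) := finite_Fob e hM
    have hc1 : ∀ (i j : J) (h : i ≤ j),
        (Fmap e (f i j h)).comp (Fmap e (α i)) = Fmap e (α j) := by
      intro i j h
      rw [← Fmap_comp, hcompat i j h]
    have hc2 : ∀ j : J,
        (Module.DirectLimit.of S J (fun j => Fob e (G j))
            (fun i j h => Fmap e (f i j h)) j).comp (Fmap e (α j)) =
          ((dlEquivF e J G f).symm :
            Fob e (Module.DirectLimit G f) →ₗ[S]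
              Module.DirectLimit (fun j => Fob e (G j))
                (fun i j h => Fmap e (f i j h))).comp (Fmap e αlim) := by
      intro j
      apply LinearMap.ext
      intro x
      apply (dlEquivF e J G f).injective
      show dlEquivF e J G f (Module.DirectLimit.of S J (fun j => Fob e (G j))
        (fun i j h => Fmap e (f i j h)) j (Fmap e (α j) x)) =
        dlEquivF e J G f ((dlEquivF e J G f).symm (Fmap e αlim x))
      rw [dlEquivF_of, LinearEquiv.apply_symm_apply]
      rw [← LinearMap.comp_apply, ← Fmap_comp, hlim j]
    have main := rk.continuity_to J (fun j => Fob e (G j)) (fun i j h => Fmap e (f i j h))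
      (Fob e M) inferInstance (fun j => Fmap e (α j))
      (((dlEquivF e J G f).symm :
        Fob e (Module.DirectLimit G f) →ₗ[S]
          Module.DirectLimit (fun j => Fob e (G j))
            (fun i j h => Fmap e (f i j h))).comp (Fmap e αlim)) hc1 hc2
    have hr : rk.r (((dlEquivF e J G f).symm :
        Fob e (Module.DirectLimit G f) →ₗ[S]
          Module.DirectLimit (fun j => Fob e (G j))
            (fun i j h => Fmap e (f i j h))).comp (Fmap e αlim)) = rk.r (Fmap e αlim) :=
      rk.r_equiv_left (dlEquivF e J G f).symm (Fmap e αlim)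
    rw [hr] at main
    show Filter.Tendsto (fun j => rk.r (Fmap e (α j)) / cconst e rk) Filter.atTop
      (nhds (rk.r (Fmap e αlim) / cconst e rk))
    exact ENNReal.Tendsto.div_const main (Or.inr (cconst_ne_zero e rk))
  additivity {M N} _ _ _ _ α := by
    show rk.r (Fmap e (LinearMap.id : N →ₗ[R] N)) / cconst e rk =
      rk.r (Fmap e α) / cconst e rk +
        rk.r (Fmap e (LinearMap.id :
          (N ⧸ LinearMap.range α) →ₗ[R] (N ⧸ LinearMap.range α))) / cconst e rk
    rw [Fmap_id, Fmap_id]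
    have h := rk.additivity (Fmap e α)
    have hiso := rk.r_id_equiv (cokerEquivF e α)
    rw [h, hiso, ENNReal.add_div]

theorem transferRank_r (rk : ExtendedSylvesterMapRank S) {M N : Type u} [AddCommGroup M]
    [Module R M] [AddCommGroup N] [Module R N] (α : M →ₗ[R] N) :
    (transferRank e rk).r α = rk.r (Fmap e α) / cconst e rk := rfl

end Transfer
end MoritaTransfer

/-- Extensionality for extended Sylvester map rank functions. -/
theorem ExtendedSylvesterMapRank.ext' {A : Type u} [Ring A]
    {rk₁ rk₂ : ExtendedSylvesterMapRank A}
    (h : ∀ (M N : Type u) [AddCommGroup M] [Module A M] [AddCommGroup N] [Module A N]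
      (α : M →ₗ[A] N), rk₁.r α = rk₂.r α) : rk₁ = rk₂ := by
  cases rk₁ with
  | mk r₁ z₁ i₁ c₁ p₁ cf₁ ct₁ a₁ =>
    cases rk₂ with
    | mk r₂ z₂ i₂ c₂ p₂ cf₂ ct₂ a₂ =>
      have hr : @r₁ = @r₂ := by
        funext M N iM mM iN mN α
        exact h M N α
      subst hr
      rfl

namespace MoritaTransfer

open CategoryTheory

variable {R S : Type u} [Ring R] [Ring S]
variable (e : ModuleCat.{u} R ≌ ModuleCat.{u} S) [e.functor.Additive] [e.inverse.Additive]

theorem r_Fmap_Gmap (rk : ExtendedSylvesterMapRank S) {P Q : Type u} [AddCommGroup P]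
    [Module S P] [AddCommGroup Q] [Module S Q] (β : P →ₗ[S] Q) :
    rk.r (Fmap e (Gmap e β)) = rk.r β := by
  have hconj : (((counitEquiv e Q) : _ →ₗ[S] Q).comp (Fmap e (Gmap e β))).comp
      ((counitEquiv e P).symm : P →ₗ[S] _) = β := by
    apply LinearMap.ext
    intro y
    show (counitEquiv e Q) (Fmap e (Gmap e β) ((counitEquiv e P).symm y)) = β y
    rw [← counit_natural_apply e β ((counitEquiv e P).symm y), LinearEquiv.apply_symm_apply]
  have h2 := rk.r_conj (counitEquiv e Q) (counitEquiv e P).symm (Fmap e (Gmap e β))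
  rw [hconj] at h2
  exact h2.symm

theorem transfer_roundtrip (rk : ExtendedSylvesterMapRank S) :
    transferRank e.symm (transferRank e rk) = rk := by
  apply ExtendedSylvesterMapRank.ext'
  intro M' N' _ _ _ _ α
  show (transferRank e rk).r (Gmap e α) /
      (transferRank e rk).r (LinearMap.id :
        (e.inverse.obj (ModuleCat.of S S) : Type u) →ₗ[R]
          (e.inverse.obj (ModuleCat.of S S) : Type u)) = rk.r α
  rw [transferRank_r, transferRank_r, Fmap_id, r_Fmap_Gmap]
  have h1 : rk.r (LinearMap.id :
      Fob e ((e.inverse.obj (ModuleCat.of S S) : Type u)) →ₗ[S]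
        Fob e ((e.inverse.obj (ModuleCat.of S S) : Type u))) = 1 := by
    rw [rk.r_id_equiv (counitEquiv e S), rk.r_id_ring]
  rw [h1, one_div, div_eq_mul_inv, div_eq_mul_inv, inv_inv, mul_assoc,
    ENNReal.inv_mul_cancel (cconst_ne_zero e rk) (cconst_ne_top e rk), mul_one]

end MoritaTransfer
namespace MoritaTransfer

open CategoryTheory

variable {R S : Type u} [Ring R] [Ring S]
variable (e : ModuleCat.{u} R ≌ ModuleCat.{u} S) [e.functor.Additive] [e.inverse.Additive]

theorem enn_helper (s a d D : ℝ≥0∞) (hd0 : d ≠ 0) (hdt : d ≠ ⊤) :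
    s * d / D * (a / d) = s * a / D := by
  rw [div_eq_mul_inv, div_eq_mul_inv, div_eq_mul_inv]
  rw [mul_right_comm s d D⁻¹, mul_assoc (s * D⁻¹) d (a * d⁻¹)]
  rw [mul_comm a d⁻¹, ← mul_assoc d d⁻¹ a, ENNReal.mul_inv_cancel hd0 hdt, one_mul]
  rw [mul_right_comm]

theorem isExtreme_transfer (rk : ExtendedSylvesterMapRank S) (hrk : IsExtremeRank S rk) :
    IsExtremeRank R (transferRank e rk) := by
  intro rk₁ rk₂ t ht0 ht1 hcomb
  set d₁ := cconst e.symm rk₁ with hd₁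
  set d₂ := cconst e.symm rk₂ with hd₂
  have hd₁0 : d₁ ≠ 0 := cconst_ne_zero e.symm rk₁
  have hd₁t : d₁ ≠ ⊤ := cconst_ne_top e.symm rk₁
  have hd₂0 : d₂ ≠ 0 := cconst_ne_zero e.symm rk₂
  have hd₂t : d₂ ≠ ⊤ := cconst_ne_top e.symm rk₂
  have ht0' : t ≠ 0 := ht0.ne'
  have htt : t ≠ ⊤ := ht1.ne_top
  have h1t0 : (1 : ℝ≥0∞) - t ≠ 0 := fun h => ht1.not_ge (tsub_eq_zero_iff_le.mp h)
  have h1tt : (1 : ℝ≥0∞) - t ≠ ⊤ := ne_top_of_le_ne_top ENNReal.one_ne_top tsub_le_self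
  set D := t * d₁ + (1 - t) * d₂ with hD
  have hD0 : D ≠ 0 := by
    intro h
    rw [hD, add_eq_zero] at h
    exact mul_ne_zero ht0' hd₁0 h.1
  have hDt : D ≠ ⊤ :=
    ENNReal.add_ne_top.mpr ⟨ENNReal.mul_ne_top htt hd₁t, ENNReal.mul_ne_top h1tt hd₂t⟩
  set t' := t * d₁ / D with ht'
  have ht'0 : 0 < t' := ENNReal.div_pos (mul_ne_zero ht0' hd₁0) hDt
  have ht'1 : t' < 1 := by
    rw [ht', ENNReal.div_lt_iff (Or.inl hD0) (Or.inl hDt), one_mul, hD]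
    exact ENNReal.lt_add_right (ENNReal.mul_ne_top htt hd₁t) (mul_ne_zero h1t0 hd₂0)
  have h1t' : 1 - t' = (1 - t) * d₂ / D := by
    have hsum : (1 : ℝ≥0∞) = (1 - t) * d₂ / D + t' := by
      rw [ht', add_comm, ENNReal.div_add_div_same, ← hD, ENNReal.div_self hD0 hDt]
    exact ENNReal.sub_eq_of_eq_add ht'1.ne_top hsum
  have comb : ∀ (M' N' : Type u) [AddCommGroup M'] [Module S M'] [AddCommGroup N']
      [Module S N'] (β : M' →ₗ[S] N'),
      rk.r β = t' * (transferRank e.symm rk₁).r β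
        + (1 - t') * (transferRank e.symm rk₂).r β := by
    intro M' N' _ _ _ _ β
    conv_lhs => rw [← transfer_roundtrip e rk]
    rw [transferRank_r e.symm (transferRank e rk) β,
      transferRank_r e.symm rk₁ β, transferRank_r e.symm rk₂ β]
    simp only [cconst]
    rw [hcomb, hcomb]
    set a := rk₁.r (Fmap e.symm β) with ha
    set b := rk₂.r (Fmap e.symm β) with hb
    have hfold₁ : rk₁.r (LinearMap.id : Fob e.symm S →ₗ[R] Fob e.symm S) = d₁ := by
      rw [hd₁]; rfl
    have hfold₂ : rk₂.r (LinearMap.id : Fob e.symm S →ₗ[R] Fob e.symm S) = d₂ := by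
      rw [hd₂]; rfl
    rw [hfold₁, hfold₂, ← hD, h1t', ht']
    rw [enn_helper t a d₁ D hd₁0 hd₁t, enn_helper (1 - t) b d₂ D hd₂0 hd₂t]
    rw [ENNReal.div_add_div_same]
  have hs := hrk (transferRank e.symm rk₁) (transferRank e.symm rk₂) t' ht'0 ht'1 comb
  have h₁ : transferRank e (transferRank e.symm rk₁) = rk₁ := transfer_roundtrip e.symm rk₁
  have h₂ : transferRank e (transferRank e.symm rk₂) = rk₂ := transfer_roundtrip e.symm rk₂
  calc rk₁ = transferRank e (transferRank e.symm rk₁) := h₁.symm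
    _ = transferRank e (transferRank e.symm rk₂) := by rw [hs]
    _ = rk₂ := h₂

end MoritaTransfer

/-- Morita invariance. Let `R` and `S` be Morita equivalent unital
rings, via an (additive) equivalence `e` of their module categories — which is induced by
Morita equivalence bimodules `_R W_S`, `_S V_R`, the functor `e.functor` corresponding to
`V ⊗_R -` and `e.inverse` to `W ⊗_S -`. Then the induced maps `f_V* : P(S) → P(R)`,
`rk ↦ (α ↦ rk(V ⊗ α)/rk(id_V))`, and `f_W* : P(R) → P(S)` on spaces of Sylvester rank
functions are mutually inverse bijections preserving extreme points. -/
theorem moritaEquivalence_sylvesterRank (R S : Type u) [Ring R] [Ring S]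
    (e : ModuleCat.{u} R ≌ ModuleCat.{u} S)
    [e.functor.Additive] [e.inverse.Additive] :
    ∃ (Φ : ExtendedSylvesterMapRank S → ExtendedSylvesterMapRank R)
      (Ψ : ExtendedSylvesterMapRank R → ExtendedSylvesterMapRank S),
      (∀ (rk : ExtendedSylvesterMapRank S) (M N : Type u) [AddCommGroup M] [Module R M]
        [AddCommGroup N] [Module R N] (α : M →ₗ[R] N),
        (Φ rk).r α =
          rk.r ((e.functor.map (ModuleCat.ofHom α)).hom :
              ↑(e.functor.obj (ModuleCat.of R M)) →ₗ[S] ↑(e.functor.obj (ModuleCat.of R N))) /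
            rk.r (LinearMap.id :
              ↑(e.functor.obj (ModuleCat.of R R)) →ₗ[S] ↑(e.functor.obj (ModuleCat.of R R)))) ∧
      (∀ (rk : ExtendedSylvesterMapRank R) (M N : Type u) [AddCommGroup M] [Module S M]
        [AddCommGroup N] [Module S N] (α : M →ₗ[S] N),
        (Ψ rk).r α =
          rk.r ((e.inverse.map (ModuleCat.ofHom α)).hom :
              ↑(e.inverse.obj (ModuleCat.of S M)) →ₗ[R] ↑(e.inverse.obj (ModuleCat.of S N))) /
            rk.r (LinearMap.id :
              ↑(e.inverse.obj (ModuleCat.of S S)) →ₗ[R] ↑(e.inverse.obj (ModuleCat.of S S)))) ∧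
      (∀ rk, Ψ (Φ rk) = rk) ∧ (∀ rk, Φ (Ψ rk) = rk) ∧
      (∀ rk, IsExtremeRank S rk ↔ IsExtremeRank R (Φ rk)) ∧
      (∀ rk, IsExtremeRank R rk ↔ IsExtremeRank S (Ψ rk)) := by
  refine ⟨MoritaTransfer.transferRank e, MoritaTransfer.transferRank e.symm,
    ?_, ?_, ?_, ?_, ?_, ?_⟩
  · intro rk M N _ _ _ _ α
    rfl
  · intro rk M N _ _ _ _ α
    rfl
  · exact MoritaTransfer.transfer_roundtrip e
  · intro rk
    exact MoritaTransfer.transfer_roundtrip e.symm rk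
  · intro rk
    constructor
    · exact MoritaTransfer.isExtreme_transfer e rk
    · intro h
      have h2 := MoritaTransfer.isExtreme_transfer e.symm (MoritaTransfer.transferRank e rk) h
      rwa [MoritaTransfer.transfer_roundtrip e rk] at h2
  · intro rk
    constructor
    · exact fun h => MoritaTransfer.isExtreme_transfer e.symm rk h
    · intro h
      have h2 := MoritaTransfer.isExtreme_transfer e (MoritaTransfer.transferRank e.symm rk) h
      have h3 : MoritaTransfer.transferRank e (MoritaTransfer.transferRank e.symm rk) = rk :=
        MoritaTransfer.transfer_roundtrip e.symm rk
      rwa [h3] at h2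
end
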